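/- arXiv:2603.02527 — 2 statements merged into one kernel-verified Lean document; each statement's English description precedes it below -/
import Mathlib

section
/- Let p > 1 be an integer and 𝔤 the gap-p Virasoro algebra, φ ∈ 𝔥* with J = {1 ≤ i ≤ p−1 : φ(C_i) ≠ 0} nonempty. Then the Verma 𝔤-module M_{𝔤,φ} is isomorphic, as a 𝔤-module, to the tensor product (M_{𝔥_J,φ})^𝔤 ⊗ (M_{𝔤_{J^C},ψ})^e. -/
open scoped TensorProduct

universe u v

/-! ### The gap-`p` Virasoro algebra -/

/-- Index type for the distinguished basis of the gap-`p` Virasoro algebra. -/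
inductive GapIdx (p : ℕ) : Type
  | L : ℤ → GapIdx p
  | I : ℤ → {i : ℕ // 1 ≤ i ∧ i ≤ p - 1} → GapIdx p
  | C : {j : ℕ // j ≤ p / 2} → GapIdx p

/-- A realization of the gap-`p` Virasoro algebra on a complex Lie algebra `g`:
distinguished elements `L n`, `I n i` (`1 ≤ i ≤ p-1`), `C j` (`0 ≤ j ≤ p-1`, with
`C (p - i) = C i`) forming a basis, subject to the defining bracket relations. -/
structure GapVirasoro (p : ℕ) (g : Type u) [LieRing g] [LieAlgebra ℂ g] where
  L : ℤ → g
  I : ℤ → ℕ → g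
  C : ℕ → g
  C_symm : ∀ i : ℕ, 1 ≤ i → i ≤ p - 1 → C (p - i) = C i
  basis : Module.Basis (GapIdx p) ℂ g
  basis_L : ∀ n : ℤ, basis (GapIdx.L n) = L n
  basis_I : ∀ (n : ℤ) (i : {i : ℕ // 1 ≤ i ∧ i ≤ p - 1}), basis (GapIdx.I n i) = I n i.1
  basis_C : ∀ j : {j : ℕ // j ≤ p / 2}, basis (GapIdx.C j) = C j.1
  bracket_LL : ∀ m n : ℤ, ⁅L m, L n⁆ =
    ((m : ℂ) - (n : ℂ)) • L (m + n) +
      (if m + n = 0 then ((1 : ℂ) / 12 * ((m : ℂ) ^ 3 - (m : ℂ))) • C 0 else 0)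
  bracket_LI : ∀ (m n : ℤ) (i : ℕ), 1 ≤ i → i ≤ p - 1 →
    ⁅L m, I n i⁆ = (-((n : ℂ) + (i : ℂ) / (p : ℂ))) • I (m + n) i
  bracket_II : ∀ (m n : ℤ) (i j : ℕ), 1 ≤ i → i ≤ p - 1 → 1 ≤ j → j ≤ p - 1 →
    ⁅I m i, I n j⁆ =
      if i + j = p ∧ m + n + 1 = 0 then ((m : ℂ) + (i : ℂ) / (p : ℂ)) • C (min i (p - i)) else 0
  central_C : ∀ j : ℕ, j ≤ p - 1 → ∀ x : g, ⁅C j, x⁆ = 0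

/-- A weight for the gap-`p` Virasoro algebra: an element of `𝔥*`, recorded by its values
on `L 0` and on the `C j`. -/
structure GapWeight (p : ℕ) where
  L0 : ℂ
  C : ℕ → ℂ
  symm : ∀ i : ℕ, 1 ≤ i → i ≤ p - 1 → C (p - i) = C i

namespace GapWeight

variable {p : ℕ}

instance : Neg (GapWeight p) :=
  ⟨fun φ => ⟨-φ.L0, fun i => -(φ.C i), fun i h1 h2 => by simp [φ.symm i h1 h2]⟩⟩

open scoped Classical in
/-- The set `J = {1 ≤ i ≤ p-1 : φ(C i) ≠ 0}`. -/
noncomputable def J (φ : GapWeight p) : Finset ℕ :=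
  (Finset.Icc 1 (p - 1)).filter fun i => φ.C i ≠ 0

open scoped Classical in
/-- The set `J^C = {1 ≤ i ≤ p-1 : φ(C i) = 0}`. -/
noncomputable def JC (φ : GapWeight p) : Finset ℕ :=
  (Finset.Icc 1 (p - 1)).filter fun i => φ.C i = 0

/-- `ψ(L 0) = φ(L 0) - ∑_{j ∈ J} j(p-j)/(4p²)`. -/
noncomputable def psiL0 (φ : GapWeight p) : ℂ :=
  φ.L0 - ∑ j ∈ φ.J, (j : ℂ) * ((p : ℂ) - (j : ℂ)) / (4 * (p : ℂ) ^ 2)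

/-- `ψ(C 0) = φ(C 0) - |J|`. -/
noncomputable def psiC0 (φ : GapWeight p) : ℂ := φ.C 0 - (φ.J.card : ℂ)

end GapWeight

/-! ### Conjugate-linear anti-involutions and unitary modules -/

/-- A conjugate-linear anti-involution of a complex Lie algebra. -/
structure IsConjLinearAntiInvolution (g : Type u) [LieRing g] [LieAlgebra ℂ g]
    (θ : g → g) : Prop where
  invol : ∀ x, θ (θ x) = x
  map_add : ∀ x y, θ (x + y) = θ x + θ y
  map_smul : ∀ (a : ℂ) (x : g), θ (a • x) = (starRingEnd ℂ a) • θ x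
  map_lie : ∀ x y, θ ⁅x, y⁆ = ⁅θ y, θ x⁆

/-- `B` is a positive definite Hermitian form on the `g`-module `M` which is contravariant
with respect to the conjugate-linear anti-involution `θ`, i.e. `⟨x•u, v⟩ = ⟨u, θ(x)•v⟩`. -/
def IsUnitaryPairing (g : Type u) [LieRing g] [LieAlgebra ℂ g]
    {M : Type v} [AddCommGroup M] [Module ℂ M] [LieRingModule g M]
    (θ : g → g) (B : M → M → ℂ) : Prop :=
  (∀ u v w : M, B (u + v) w = B u w + B v w) ∧
  (∀ (a : ℂ) (u v : M), B (a • u) v = a * B u v) ∧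
  (∀ u v : M, B v u = starRingEnd ℂ (B u v)) ∧
  (∀ v : M, v ≠ 0 → 0 < (B v v).re) ∧
  (∀ (x : g) (u v : M), B ⁅x, u⁆ v = B u ⁅θ x, v⁆)

/-- The `g`-module `M` is unitary for the conjugate-linear anti-involution `θ`. -/
def IsUnitaryRep (g : Type u) [LieRing g] [LieAlgebra ℂ g]
    (θ : g → g) (M : Type v) [AddCommGroup M] [Module ℂ M] [LieRingModule g M] : Prop :=
  ∃ B : M → M → ℂ, IsUnitaryPairing g θ B

/-- Irreducibility of a Lie module (nonzero, and no proper nonzero Lie submodules). -/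
def LieIrreducible (g : Type u) [LieRing g] [LieAlgebra ℂ g]
    (M : Type v) [AddCommGroup M] [Module ℂ M] [LieRingModule g M] : Prop :=
  (∃ u : M, u ≠ 0) ∧ ∀ U : LieSubmodule ℂ g M, U = ⊥ ∨ U = ⊤

/-! ### Representations of the Heisenberg subalgebra `𝔥_J` by operators -/

/-- A representation of the Heisenberg algebra `𝔥_J` on a complex vector space `N`,
given by operators satisfying the defining relations. -/
structure HeisRep (p : ℕ) (J : Finset ℕ) (N : Type v) [AddCommGroup N] [Module ℂ N] where
  I : ℤ → ℕ → Module.End ℂ N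
  C : ℕ → Module.End ℂ N
  C_symm : ∀ i ∈ J, C (p - i) = C i
  comm_II : ∀ (m n : ℤ) (i j : ℕ), i ∈ J → j ∈ J →
    ⁅I m i, I n j⁆ =
      if i + j = p ∧ m + n + 1 = 0 then ((m : ℂ) + (i : ℂ) / (p : ℂ)) • C (min i (p - i)) else 0
  central_CI : ∀ (m : ℤ) (i j : ℕ), i ∈ J → j ∈ J → ⁅C j, I m i⁆ = 0
  central_CC : ∀ i j : ℕ, i ∈ J → j ∈ J → ⁅C j, C i⁆ = 0

namespace HeisRep

variable {p : ℕ} {J : Finset ℕ} {N : Type v} [AddCommGroup N] [Module ℂ N]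

/-- `v` is a highest weight vector of weight `c` for the Heisenberg representation. -/
def IsHWVector (ρ : HeisRep p J N) (c : ℕ → ℂ) (v : N) : Prop :=
  (∀ n : ℤ, 0 ≤ n → ∀ i ∈ J, ρ.I n i v = 0) ∧ (∀ i ∈ J, ρ.C i v = c i • v)

/-- `(N, v)` is the Verma module for `𝔥_J` of highest weight `c`, characterized by the
universal property of `U(𝔥_J) ⊗ ℂv`. -/
def IsVerma (ρ : HeisRep p J N) (c : ℕ → ℂ) (v : N) : Prop :=
  ρ.IsHWVector c v ∧
  ∀ (N' : Type v) [AddCommGroup N'] [Module ℂ N'] (ρ' : HeisRep p J N') (w : N'),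
    ρ'.IsHWVector c w →
    ∃! f : N →ₗ[ℂ] N', f v = w ∧
      (∀ (m : ℤ) (i : ℕ), i ∈ J → ∀ u : N, f (ρ.I m i u) = ρ'.I m i (f u)) ∧
      (∀ i ∈ J, ∀ u : N, f (ρ.C i u) = ρ'.C i (f u))

/-- A subspace invariant under the Heisenberg action. -/
def Invariant (ρ : HeisRep p J N) (W : Submodule ℂ N) : Prop :=
  (∀ (m : ℤ) (i : ℕ), i ∈ J → ∀ u ∈ W, ρ.I m i u ∈ W) ∧
  (∀ i ∈ J, ∀ u ∈ W, ρ.C i u ∈ W)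

/-- Irreducibility of a Heisenberg representation. -/
def IsIrreducible (ρ : HeisRep p J N) : Prop :=
  (∃ u : N, u ≠ 0) ∧ ∀ W : Submodule ℂ N, ρ.Invariant W → W = ⊥ ∨ W = ⊤

end HeisRep

/-! ### Representations of the subalgebra `𝔤_{J^C}` by operators -/

/-- A representation of the subalgebra `𝔤_{J^C}` on a complex vector space `N`, given by
operators satisfying the defining relations. -/
structure GJCRep (p : ℕ) (JC : Finset ℕ) (N : Type v) [AddCommGroup N] [Module ℂ N] where
  L : ℤ → Module.End ℂ N
  I : ℤ → ℕ → Module.End ℂ N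
  C0 : Module.End ℂ N
  C : ℕ → Module.End ℂ N
  C_symm : ∀ i ∈ JC, C (p - i) = C i
  comm_LL : ∀ m n : ℤ, ⁅L m, L n⁆ =
    ((m : ℂ) - (n : ℂ)) • L (m + n) +
      (if m + n = 0 then ((1 : ℂ) / 12 * ((m : ℂ) ^ 3 - (m : ℂ))) • C0 else 0)
  comm_LI : ∀ (m n : ℤ) (i : ℕ), i ∈ JC →
    ⁅L m, I n i⁆ = (-((n : ℂ) + (i : ℂ) / (p : ℂ))) • I (m + n) i
  comm_II : ∀ (m n : ℤ) (i j : ℕ), i ∈ JC → j ∈ JC →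
    ⁅I m i, I n j⁆ =
      if i + j = p ∧ m + n + 1 = 0 then ((m : ℂ) + (i : ℂ) / (p : ℂ)) • C (min i (p - i)) else 0
  central_C0 : ∀ m : ℤ, ⁅C0, L m⁆ = 0 ∧ ∀ i ∈ JC, ⁅C0, I m i⁆ = 0
  central_C : ∀ j ∈ JC, (∀ m : ℤ, ⁅C j, L m⁆ = 0) ∧ (∀ (m : ℤ), ∀ i ∈ JC, ⁅C j, I m i⁆ = 0) ∧
    ⁅C j, C0⁆ = 0 ∧ ∀ i ∈ JC, ⁅C j, C i⁆ = 0

namespace GJCRep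

variable {p : ℕ} {JC : Finset ℕ} {N : Type v} [AddCommGroup N] [Module ℂ N]

/-- `v` is a highest weight vector of weight `ψ` (with `ψ(L 0) = h`, `ψ(C 0) = c`,
`ψ(C i) = 0` for `i ∈ J^C`). -/
def IsHWVector (ρ : GJCRep p JC N) (h c : ℂ) (v : N) : Prop :=
  (∀ n : ℤ, 0 < n → ρ.L n v = 0) ∧ (∀ n : ℤ, 0 ≤ n → ∀ i ∈ JC, ρ.I n i v = 0) ∧
  ρ.L 0 v = h • v ∧ ρ.C0 v = c • v ∧ (∀ i ∈ JC, ρ.C i v = 0)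

/-- `(N, v)` is the Verma module for `𝔤_{J^C}` of highest weight `ψ`, characterized by the
universal property. -/
def IsVerma (ρ : GJCRep p JC N) (h c : ℂ) (v : N) : Prop :=
  ρ.IsHWVector h c v ∧
  ∀ (N' : Type v) [AddCommGroup N'] [Module ℂ N'] (ρ' : GJCRep p JC N') (w : N'),
    ρ'.IsHWVector h c w →
    ∃! f : N →ₗ[ℂ] N', f v = w ∧
      (∀ (m : ℤ) (u : N), f (ρ.L m u) = ρ'.L m (f u)) ∧
      (∀ (m : ℤ) (i : ℕ), i ∈ JC → ∀ u : N, f (ρ.I m i u) = ρ'.I m i (f u)) ∧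
      (∀ u : N, f (ρ.C0 u) = ρ'.C0 (f u)) ∧
      (∀ i ∈ JC, ∀ u : N, f (ρ.C i u) = ρ'.C i (f u))

/-- A subspace invariant under the `𝔤_{J^C}`-action. -/
def Invariant (ρ : GJCRep p JC N) (W : Submodule ℂ N) : Prop :=
  (∀ (m : ℤ), ∀ u ∈ W, ρ.L m u ∈ W) ∧
  (∀ (m : ℤ) (i : ℕ), i ∈ JC → ∀ u ∈ W, ρ.I m i u ∈ W) ∧
  (∀ u ∈ W, ρ.C0 u ∈ W) ∧ (∀ i ∈ JC, ∀ u ∈ W, ρ.C i u ∈ W)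

/-- Irreducibility of a `𝔤_{J^C}`-representation. -/
def IsIrreducible (ρ : GJCRep p JC N) : Prop :=
  (∃ u : N, u ≠ 0) ∧ ∀ W : Submodule ℂ N, ρ.Invariant W → W = ⊥ ∨ W = ⊤

end GJCRep

/-- Vectors obtained from `v` by repeatedly applying the operators `I m i` and `I m (p-i)`;
their span is `U(ℋ_{i,p-i})v`. -/
inductive GJCRep.Orbit {p : ℕ} {JC : Finset ℕ} {N : Type v} [AddCommGroup N] [Module ℂ N]
    (ρ : GJCRep p JC N) (i : ℕ) (v : N) : N → Prop
  | base : GJCRep.Orbit ρ i v v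
  | step_lo (m : ℤ) (u : N) : GJCRep.Orbit ρ i v u → GJCRep.Orbit ρ i v (ρ.I m i u)
  | step_hi (m : ℤ) (u : N) : GJCRep.Orbit ρ i v u → GJCRep.Orbit ρ i v (ρ.I m (p - i) u)

/-! ### Representations of the full gap-`p` Virasoro algebra by operators -/

/-- A representation of the gap-`p` Virasoro algebra on a complex vector space `N`,
given by operators satisfying the defining relations. -/
structure GapRep (p : ℕ) (N : Type v) [AddCommGroup N] [Module ℂ N] where
  L : ℤ → Module.End ℂ N
  I : ℤ → ℕ → Module.End ℂ N
  C : ℕ → Module.End ℂ N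
  C_symm : ∀ i : ℕ, 1 ≤ i → i ≤ p - 1 → C (p - i) = C i
  comm_LL : ∀ m n : ℤ, ⁅L m, L n⁆ =
    ((m : ℂ) - (n : ℂ)) • L (m + n) +
      (if m + n = 0 then ((1 : ℂ) / 12 * ((m : ℂ) ^ 3 - (m : ℂ))) • C 0 else 0)
  comm_LI : ∀ (m n : ℤ) (i : ℕ), 1 ≤ i → i ≤ p - 1 →
    ⁅L m, I n i⁆ = (-((n : ℂ) + (i : ℂ) / (p : ℂ))) • I (m + n) i
  comm_II : ∀ (m n : ℤ) (i j : ℕ), 1 ≤ i → i ≤ p - 1 → 1 ≤ j → j ≤ p - 1 →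
    ⁅I m i, I n j⁆ =
      if i + j = p ∧ m + n + 1 = 0 then ((m : ℂ) + (i : ℂ) / (p : ℂ)) • C (min i (p - i)) else 0
  central_C : ∀ j : ℕ, j ≤ p - 1 →
    (∀ m : ℤ, ⁅C j, L m⁆ = 0) ∧
    (∀ (m : ℤ) (i : ℕ), 1 ≤ i → i ≤ p - 1 → ⁅C j, I m i⁆ = 0) ∧
    (∀ k : ℕ, k ≤ p - 1 → ⁅C j, C k⁆ = 0)

namespace GapRep

variable {p : ℕ} {N : Type v} [AddCommGroup N] [Module ℂ N]

/-- Highest weight vector of weight `(hL, hC)`. -/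
def IsHWVector (ρ : GapRep p N) (hL : ℂ) (hC : ℕ → ℂ) (w : N) : Prop :=
  (∀ n : ℤ, 0 < n → ρ.L n w = 0) ∧
  (∀ n : ℤ, 0 ≤ n → ∀ i : ℕ, 1 ≤ i → i ≤ p - 1 → ρ.I n i w = 0) ∧
  ρ.L 0 w = hL • w ∧ (∀ j : ℕ, j ≤ p - 1 → ρ.C j w = hC j • w)

/-- A subspace invariant under the action. -/
def Invariant (ρ : GapRep p N) (W : Submodule ℂ N) : Prop :=
  (∀ m : ℤ, ∀ u ∈ W, ρ.L m u ∈ W) ∧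
  (∀ (m : ℤ) (i : ℕ), 1 ≤ i → i ≤ p - 1 → ∀ u ∈ W, ρ.I m i u ∈ W) ∧
  (∀ j : ℕ, j ≤ p - 1 → ∀ u ∈ W, ρ.C j u ∈ W)

/-- Irreducibility. -/
def IsIrreducible (ρ : GapRep p N) : Prop :=
  (∃ u : N, u ≠ 0) ∧ ∀ W : Submodule ℂ N, ρ.Invariant W → W = ⊥ ∨ W = ⊤

end GapRep

/-! ### The normally ordered `L n`-action formula -/

/-- The action `∑_{j∈J} (1/(2 c j)) ∑_k :I_k^j I_{n-k-1}^{p-j}: + δ_{n,0} ∑_{j∈J} j(p-j)/(4p²)`,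
for a family of operators `Iop`.  The inner (finitary) sum over `k ∈ ℤ` is a `finsum`. -/
noncomputable def gapLnFormula {M : Type v} [AddCommGroup M] [Module ℂ M]
    (p : ℕ) (J : Finset ℕ) (c : ℕ → ℂ) (Iop : ℤ → ℕ → M → M) (n : ℤ) (u : M) : M :=
  (∑ j ∈ J, (1 / (2 * c j)) • (∑ᶠ k : ℤ,
      if k < n - k - 1 then Iop k j (Iop (n - k - 1) (p - j) u)
      else Iop (n - k - 1) (p - j) (Iop k j u))) +
  (if n = 0 then (∑ j ∈ J, (j : ℂ) * ((p : ℂ) - (j : ℂ)) / (4 * (p : ℂ) ^ 2)) • u else 0)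

/-! ### Module-theoretic notions for the gap-`p` Virasoro algebra -/

namespace GapVirasoro

variable {p : ℕ} {g : Type u} [LieRing g] [LieAlgebra ℂ g] (S : GapVirasoro p g)
variable {M : Type v} [AddCommGroup M] [Module ℂ M] [LieRingModule g M] [LieModule ℂ g M]

/-- `v` is a highest weight vector of weight `φ`. -/
def IsHWVector (φ : GapWeight p) (v : M) : Prop :=
  (∀ n : ℤ, 0 < n → ⁅S.L n, v⁆ = 0) ∧
  (∀ n : ℤ, 0 ≤ n → ∀ i : ℕ, 1 ≤ i → i ≤ p - 1 → ⁅S.I n i, v⁆ = 0) ∧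
  ⁅S.L 0, v⁆ = φ.L0 • v ∧
  (∀ j : ℕ, j ≤ p - 1 → ⁅S.C j, v⁆ = φ.C j • v)

/-- `v` is a lowest weight vector of weight `φ`. -/
def IsLWVector (φ : GapWeight p) (v : M) : Prop :=
  (∀ n : ℤ, n < 0 → ⁅S.L n, v⁆ = 0) ∧
  (∀ n : ℤ, n < 0 → ∀ i : ℕ, 1 ≤ i → i ≤ p - 1 → ⁅S.I n i, v⁆ = 0) ∧
  ⁅S.L 0, v⁆ = φ.L0 • v ∧
  (∀ j : ℕ, j ≤ p - 1 → ⁅S.C j, v⁆ = φ.C j • v)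

/-- `(M, v)` is the Verma module of highest weight `φ` over the gap-`p` Virasoro algebra,
characterized by the universal property of `U(𝔤) ⊗_{U(𝔥 ⊕ 𝔤₊)} ℂv_φ`. -/
def IsVerma (φ : GapWeight p) (v : M) : Prop :=
  S.IsHWVector φ v ∧
  ∀ (N : Type v) [AddCommGroup N] [Module ℂ N] [LieRingModule g N] [LieModule ℂ g N] (w : N),
    S.IsHWVector φ w → ∃! f : M →ₗ⁅ℂ,g⁆ N, f v = w

/-- `M` is the irreducible highest weight module of highest weight `φ`. -/
def IsIrredHW (φ : GapWeight p) : Prop :=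
  (∃ v : M, v ≠ 0 ∧ S.IsHWVector φ v) ∧ LieIrreducible g M

/-- The restriction of the `g`-module `M` to `𝔥_J` is the Verma module `M_{𝔥_J, c}`
with highest weight vector `v` (stated via the universal property). -/
def IsHeisVerma (J : Finset ℕ) (c : ℕ → ℂ) (v : M) : Prop :=
  (∀ n : ℤ, 0 ≤ n → ∀ i ∈ J, ⁅S.I n i, v⁆ = 0) ∧
  (∀ i ∈ J, ⁅S.C i, v⁆ = c i • v) ∧
  ∀ (N : Type v) [AddCommGroup N] [Module ℂ N] (ρ : HeisRep p J N) (w : N),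
    ρ.IsHWVector c w →
    ∃! f : M →ₗ[ℂ] N, f v = w ∧
      (∀ (m : ℤ) (i : ℕ), i ∈ J → ∀ u : M, f ⁅S.I m i, u⁆ = ρ.I m i (f u)) ∧
      (∀ i ∈ J, ∀ u : M, f ⁅S.C i, u⁆ = ρ.C i (f u))

/-- The `g`-module `M` is `(M_{𝔥_J,φ})^𝔤`: its restriction to `𝔥_J` is the Verma module
`M_{𝔥_J,φ}`, the operators `I n i` for `i ∉ J` act trivially, `C i` acts by `φ(C i)` for
`i ∈ J` and by `0` for `i ∈ J^C`, `C 0` acts by `|J|`, and `L n` acts by the normally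
ordered sum of Proposition `gmodext`. -/
def IsHeisVermaExt (φ : GapWeight p) (v : M) : Prop :=
  S.IsHeisVerma φ.J φ.C v ∧
  (∀ (n : ℤ) (i : ℕ), 1 ≤ i → i ≤ p - 1 → i ∉ φ.J → ∀ u : M, ⁅S.I n i, u⁆ = 0) ∧
  (∀ i ∈ φ.J, ∀ u : M, ⁅S.C i, u⁆ = φ.C i • u) ∧
  (∀ i : ℕ, 1 ≤ i → i ≤ p - 1 → i ∉ φ.J → ∀ u : M, ⁅S.C i, u⁆ = 0) ∧
  (∀ u : M, ⁅S.C 0, u⁆ = (φ.J.card : ℂ) • u) ∧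
  (∀ (n : ℤ) (u : M), ⁅S.L n, u⁆ =
    gapLnFormula p φ.J φ.C (fun m i u => ⁅S.I m i, u⁆) n u)

/-- The restriction of the `g`-module `M` to `𝔤_{J^C}` is the Verma module of highest
weight `ψ` (with `ψ(L 0) = h`, `ψ(C 0) = c`, `ψ(C i) = 0`), with highest weight vector `v`. -/
def IsGJCVerma (JC : Finset ℕ) (h c : ℂ) (v : M) : Prop :=
  (∀ n : ℤ, 0 < n → ⁅S.L n, v⁆ = 0) ∧
  (∀ n : ℤ, 0 ≤ n → ∀ i ∈ JC, ⁅S.I n i, v⁆ = 0) ∧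
  ⁅S.L 0, v⁆ = h • v ∧ ⁅S.C 0, v⁆ = c • v ∧ (∀ i ∈ JC, ⁅S.C i, v⁆ = 0) ∧
  ∀ (N : Type v) [AddCommGroup N] [Module ℂ N] (ρ : GJCRep p JC N) (w : N),
    ρ.IsHWVector h c w →
    ∃! f : M →ₗ[ℂ] N, f v = w ∧
      (∀ (m : ℤ) (u : M), f ⁅S.L m, u⁆ = ρ.L m (f u)) ∧
      (∀ (m : ℤ) (i : ℕ), i ∈ JC → ∀ u : M, f ⁅S.I m i, u⁆ = ρ.I m i (f u)) ∧
      (∀ u : M, f ⁅S.C 0, u⁆ = ρ.C0 (f u)) ∧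
      (∀ i ∈ JC, ∀ u : M, f ⁅S.C i, u⁆ = ρ.C i (f u))

/-- The `g`-module `M` is `(M_{𝔤_{J^C},ψ})^e`: its restriction to `𝔤_{J^C}` is the Verma
module `M_{𝔤_{J^C},ψ}` and the ideal `𝔥_J` acts trivially. -/
def IsGJCVermaExt (φ : GapWeight p) (v : M) : Prop :=
  S.IsGJCVerma φ.JC φ.psiL0 φ.psiC0 v ∧
  (∀ (n : ℤ), ∀ i ∈ φ.J, ∀ u : M, ⁅S.I n i, u⁆ = 0) ∧
  (∀ i ∈ φ.J, ∀ u : M, ⁅S.C i, u⁆ = 0)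

/-- A subspace of `M` invariant under the Virasoro subalgebra `𝒱 = span{L n, C 0}`. -/
def VirInvariant (W : Submodule ℂ M) : Prop :=
  (∀ n : ℤ, ∀ u ∈ W, ⁅S.L n, u⁆ ∈ W) ∧ (∀ u ∈ W, ⁅S.C 0, u⁆ ∈ W)

/-- `v` is a highest weight vector for the Virasoro subalgebra, of weight `(h, c)`. -/
def IsVirHWVector (h c : ℂ) (v : M) : Prop :=
  (∀ n : ℤ, 0 < n → ⁅S.L n, v⁆ = 0) ∧ ⁅S.L 0, v⁆ = h • v ∧ ⁅S.C 0, v⁆ = c • v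

/-- The `g`-module `M` is `(V_{𝒱,ψ})^e`: its restriction to the Virasoro subalgebra `𝒱` is
the irreducible highest weight `𝒱`-module of highest weight `ψ = (h, c)`, and all `I n i`
and `C i` (`1 ≤ i ≤ p-1`) act trivially. -/
def IsVirEHW (h c : ℂ) (M : Type v) [AddCommGroup M] [Module ℂ M] [LieRingModule g M]
    [LieModule ℂ g M] : Prop :=
  (∃ v : M, v ≠ 0 ∧ S.IsVirHWVector h c v) ∧
  ((∃ u : M, u ≠ 0) ∧ ∀ W : Submodule ℂ M, S.VirInvariant W → W = ⊥ ∨ W = ⊤) ∧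
  (∀ (n : ℤ) (i : ℕ), 1 ≤ i → i ≤ p - 1 → ∀ u : M, ⁅S.I n i, u⁆ = 0) ∧
  (∀ i : ℕ, 1 ≤ i → i ≤ p - 1 → ∀ u : M, ⁅S.C i, u⁆ = 0)

/-- The weight space of `M` for the weight with `L 0`-eigenvalue `lm` and
`C j`-eigenvalues `cv j`. -/
noncomputable def weightSpace (lm : ℂ) (cv : ℕ → ℂ) : Submodule ℂ M :=
  Module.End.eigenspace (LieModule.toEnd ℂ g M (S.L 0)) lm ⊓
    ⨅ j ∈ Finset.Iic (p - 1), Module.End.eigenspace (LieModule.toEnd ℂ g M (S.C j)) (cv j)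

/-- `M` is a weight module: it is spanned by simultaneous eigenvectors of `𝔥`. -/
def IsWeightModule (M : Type v) [AddCommGroup M] [Module ℂ M] [LieRingModule g M]
    [LieModule ℂ g M] : Prop :=
  Submodule.span ℂ {u : M | ∃ (lm : ℂ) (cv : ℕ → ℂ),
    ⁅S.L 0, u⁆ = lm • u ∧ ∀ j : ℕ, j ≤ p - 1 → ⁅S.C j, u⁆ = cv j • u} = ⊤

/-- `M` is a Harish-Chandra module: a weight module all of whose weight spaces are
finite dimensional. -/
def IsHarishChandra (M : Type v) [AddCommGroup M] [Module ℂ M] [LieRingModule g M]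
    [LieModule ℂ g M] : Prop :=
  S.IsWeightModule M ∧
  ∀ (lm : ℂ) (cv : ℕ → ℂ), FiniteDimensional ℂ (S.weightSpace (M := M) lm cv)

/-- The conjugate-linear anti-involution `θ⁺_{1,β}`. -/
def IsThetaPlus (β : ℕ → ℂ) (θ : g → g) : Prop :=
  IsConjLinearAntiInvolution g θ ∧
  (∀ n : ℤ, θ (S.L n) = S.L (-n)) ∧
  (∀ (n : ℤ) (i : ℕ), 1 ≤ i → i ≤ p - 1 → θ (S.I n i) = β (p - i) • S.I (-n - 1) (p - i)) ∧
  θ (S.C 0) = S.C 0 ∧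
  (∀ i : ℕ, 1 ≤ i → i ≤ p - 1 → θ (S.C i) = (β i * β (p - i)) • S.C i)

/-- The center `𝔠 = span{C j}`. -/
def centerSub : Submodule ℂ g :=
  Submodule.span ℂ {x : g | ∃ j : ℕ, j ≤ p - 1 ∧ x = S.C j}

/-- The Cartan subalgebra `𝔥 = span{L 0, C j}`. -/
def cartanSub : Submodule ℂ g :=
  Submodule.span ℂ ({S.L 0} ∪ {x : g | ∃ j : ℕ, j ≤ p - 1 ∧ x = S.C j})

/-- The Virasoro subalgebra `𝒱 = span{L n, C 0}`. -/
def virSub : Submodule ℂ g :=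
  Submodule.span ℂ ({x : g | ∃ n : ℤ, x = S.L n} ∪ {S.C 0})

/-- The Heisenberg ideal `ℋ = span{I n i, C i : 1 ≤ i ≤ p-1}`. -/
def heisSub : Submodule ℂ g :=
  Submodule.span ℂ {x : g | (∃ (n : ℤ) (i : ℕ), 1 ≤ i ∧ i ≤ p - 1 ∧ x = S.I n i) ∨
    (∃ i : ℕ, 1 ≤ i ∧ i ≤ p - 1 ∧ x = S.C i)}

/-- The subalgebra `𝔤_{J^C} = span{L n, I n i, C 0, C i : i ∈ J^C}`. -/
def gjcSub (JC : Finset ℕ) : Submodule ℂ g :=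
  Submodule.span ℂ {x : g | (∃ n : ℤ, x = S.L n) ∨ (∃ (n : ℤ), ∃ i ∈ JC, x = S.I n i) ∨
    x = S.C 0 ∨ (∃ i ∈ JC, x = S.C i)}

/-- The Heisenberg ideal `𝔥_J = span{I n i, C i : i ∈ J}`. -/
def hJSub (J : Finset ℕ) : Submodule ℂ g :=
  Submodule.span ℂ {x : g | (∃ (n : ℤ), ∃ i ∈ J, x = S.I n i) ∨ (∃ i ∈ J, x = S.C i)}

end GapVirasoro

/-! ### Modules of intermediate series -/

open scoped Classical in
/-- `col(F) = {0 ≤ j ≤ p-1 : F i j ≠ 0 for some i}`. -/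
noncomputable def colF (p : ℕ) (F : ℕ → ℕ → ℂ) : Finset ℕ :=
  (Finset.range p).filter fun j => ∃ i : ℕ, 1 ≤ i ∧ i ≤ p - 1 ∧ F i j ≠ 0

open scoped Classical in
/-- `row(F) = {1 ≤ i ≤ p-1 : F i j ≠ 0 for some j}`. -/
noncomputable def rowF (p : ℕ) (F : ℕ → ℕ → ℂ) : Finset ℕ :=
  (Finset.Icc 1 (p - 1)).filter fun i => ∃ j : ℕ, j ≤ p - 1 ∧ F i j ≠ 0

/-- The compatibility conditions on the matrix `F` defining `V(a, b, F)`. -/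
def FCompat (p : ℕ) (F : ℕ → ℕ → ℂ) : Prop :=
  (∀ r s i : ℕ, 1 ≤ r → r ≤ p - 1 → 1 ≤ s → s ≤ p - 1 → i ≤ p - 1 →
    F s i * F r ((i + s) % p) = F r i * F s ((i + r) % p)) ∧
  (∀ i j : ℕ, j ∈ colF p F → i ∈ rowF p F → (i + j) % p ∈ colF p F)

/-- A realization of the module of intermediate series `V(a, b, F)` on the `g`-module `M`:
a basis `v_{k + j/p}` (`k ∈ ℤ`, `j ∈ col(F)`) with the prescribed action. -/
structure IntermediateSeries (p : ℕ) (a b : ℂ) (F : ℕ → ℕ → ℂ)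
    {g : Type u} [LieRing g] [LieAlgebra ℂ g] (S : GapVirasoro p g)
    (M : Type v) [AddCommGroup M] [Module ℂ M] [LieRingModule g M] [LieModule ℂ g M] where
  vec : ℤ → ℕ → M
  basis : Module.Basis (ℤ × {j : ℕ // j ∈ colF p F}) ℂ M
  basis_eq : ∀ (k : ℤ) (j : {j : ℕ // j ∈ colF p F}), basis (k, j) = vec k j.1
  act_L : ∀ (m k : ℤ) (j : ℕ), j ∈ colF p F →
    ⁅S.L m, vec k j⁆ = (-(a + (k : ℂ) + (j : ℂ) / (p : ℂ) + b * (m : ℂ))) • vec (m + k) j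
  act_I : ∀ (m k : ℤ) (i j : ℕ), 1 ≤ i → i ≤ p - 1 → j ∈ colF p F →
    ⁅S.I m i, vec k j⁆ = F i j • vec (m + k + (((i + j) / p : ℕ) : ℤ)) ((i + j) % p)
  act_C : ∀ s : ℕ, s ≤ p - 1 → ∀ u : M, ⁅S.C s, u⁆ = 0

namespace GapVirasoro

variable {p : ℕ} {g : Type u} [LieRing g] [LieAlgebra ℂ g] (S : GapVirasoro p g)
variable {M : Type v} [AddCommGroup M] [Module ℂ M] [LieRingModule g M] [LieModule ℂ g M]

/-- A subspace of `M` invariant under the subalgebra `𝔤_{J^C}`. -/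
def GJCInvariant (JC : Finset ℕ) (W : Submodule ℂ M) : Prop :=
  (∀ n : ℤ, ∀ u ∈ W, ⁅S.L n, u⁆ ∈ W) ∧
  (∀ n : ℤ, ∀ i ∈ JC, ∀ u ∈ W, ⁅S.I n i, u⁆ ∈ W) ∧
  (∀ u ∈ W, ⁅S.C 0, u⁆ ∈ W) ∧
  (∀ i ∈ JC, ∀ u ∈ W, ⁅S.C i, u⁆ ∈ W)

end GapVirasoro

/-- The quantity `Φ(α, β)` of Theorem `irrgmod` (3). -/
noncomputable def gapPhi (p : ℕ) (φ : GapWeight p) (α β : ℕ) : ℂ :=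
  4 * φ.L0 - (∑ j ∈ Finset.Icc 1 (p - 1), (j : ℂ) * ((p : ℂ) - (j : ℂ)) / (p : ℂ) ^ 2) +
    ((α : ℂ) ^ 2 - 1) * (φ.C 0 - (p : ℂ) - 12) / 6 + 2 * ((α : ℂ) * (β : ℂ) - 1)

/-- Conditions (1) and (2) of the unitarity criterion for irreducible highest weight
modules (Theorem `unitaryhimod`). -/
def gapUnitaryHWCond (p : ℕ) (φ : GapWeight p) (β : ℕ → ℂ) : Prop :=
  (∀ i ∈ φ.J, (β i * φ.C i).im = 0 ∧ β i * φ.C i ≠ 0) ∧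
  (((∃ cr : ℝ, φ.C 0 = (cr : ℂ) ∧ (φ.J.card : ℝ) + 1 ≤ cr) ∧
    (∃ hr : ℝ, φ.L0 = (hr : ℂ) ∧
      (∑ j ∈ φ.J, (j : ℝ) * ((p : ℝ) - (j : ℝ)) / (4 * (p : ℝ) ^ 2)) ≤ hr)) ∨
   (∃ m : ℕ, 2 ≤ m ∧ ∃ r s : ℕ, r < s ∧ s < m ∧
     φ.C 0 = (φ.J.card : ℂ) + 1 - 6 / ((m : ℂ) * ((m : ℂ) + 1)) ∧
     φ.L0 = (∑ j ∈ φ.J, (j : ℂ) * ((p : ℂ) - (j : ℂ)) / (4 * (p : ℂ) ^ 2)) +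
       (((m : ℂ) * (r : ℂ) + (s : ℂ)) ^ 2 - 1) / (4 * (m : ℂ) * ((m : ℂ) + 1))))

/-! ### Auxiliary material for the proof of `verma_iso_tensor` -/

namespace VermaIsoAux

attribute [local instance 100] LieRing.ofAssociativeRing

variable {p : ℕ} {g : Type u} [LieRing g] [LieAlgebra ℂ g]

section Jfacts

variable {φ : GapWeight p}

theorem mem_J_iff {i : ℕ} : i ∈ φ.J ↔ (1 ≤ i ∧ i ≤ p - 1) ∧ φ.C i ≠ 0 := by
  classical
  simp [GapWeight.J, Finset.mem_filter, Finset.mem_Icc]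

theorem mem_JC_iff {i : ℕ} : i ∈ φ.JC ↔ (1 ≤ i ∧ i ≤ p - 1) ∧ φ.C i = 0 := by
  classical
  simp [GapWeight.JC, Finset.mem_filter, Finset.mem_Icc]

theorem J_lb {i : ℕ} (h : i ∈ φ.J) : 1 ≤ i := (mem_J_iff.1 h).1.1
theorem J_ub {i : ℕ} (h : i ∈ φ.J) : i ≤ p - 1 := (mem_J_iff.1 h).1.2
theorem J_C_ne {i : ℕ} (h : i ∈ φ.J) : φ.C i ≠ 0 := (mem_J_iff.1 h).2
theorem JC_lb {i : ℕ} (h : i ∈ φ.JC) : 1 ≤ i := (mem_JC_iff.1 h).1.1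
theorem JC_ub {i : ℕ} (h : i ∈ φ.JC) : i ≤ p - 1 := (mem_JC_iff.1 h).1.2
theorem JC_C_eq {i : ℕ} (h : i ∈ φ.JC) : φ.C i = 0 := (mem_JC_iff.1 h).2

theorem J_symm (hp : 1 < p) {i : ℕ} (h : i ∈ φ.J) : p - i ∈ φ.J := by
  rcases mem_J_iff.1 h with ⟨⟨h1, h2⟩, h3⟩
  refine mem_J_iff.2 ⟨⟨by omega, by omega⟩, ?_⟩
  rwa [φ.symm i h1 h2]

theorem JC_symm (hp : 1 < p) {i : ℕ} (h : i ∈ φ.JC) : p - i ∈ φ.JC := by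
  rcases mem_JC_iff.1 h with ⟨⟨h1, h2⟩, h3⟩
  refine mem_JC_iff.2 ⟨⟨by omega, by omega⟩, ?_⟩
  rwa [φ.symm i h1 h2]

theorem min_mem_J (hp : 1 < p) {i : ℕ} (h : i ∈ φ.J) : min i (p - i) ∈ φ.J := by
  rcases le_total i (p - i) with hle | hle
  · rwa [min_eq_left hle]
  · rw [min_eq_right hle]; exact J_symm hp h

theorem not_mem_J_C_eq {i : ℕ} (h1 : 1 ≤ i) (h2 : i ≤ p - 1) (h : i ∉ φ.J) : φ.C i = 0 := by
  by_contra hne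
  exact h (mem_J_iff.2 ⟨⟨h1, h2⟩, hne⟩)

theorem not_mem_J_mem_JC {i : ℕ} (h1 : 1 ≤ i) (h2 : i ≤ p - 1) (h : i ∉ φ.J) : i ∈ φ.JC :=
  mem_JC_iff.2 ⟨⟨h1, h2⟩, not_mem_J_C_eq h1 h2 h⟩

theorem JC_not_mem_J {i : ℕ} (h : i ∈ φ.JC) : i ∉ φ.J := fun hJ => J_C_ne hJ (JC_C_eq h)

/-- If `i ∈ J^C` and `j ∈ J` then `i + j ≠ p`. -/
theorem JC_add_J_ne (hp : 1 < p) {i j : ℕ} (hi : i ∈ φ.JC) (hj : j ∈ φ.J) : i + j ≠ p := by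
  intro hij
  have h1 := JC_lb hi; have h2 := JC_ub hi
  have : j = p - i := by omega
  exact JC_not_mem_J (JC_symm hp hi) (this ▸ hj)

end Jfacts

section Reps

variable (S : GapVirasoro p g) (φ : GapWeight p)
variable (M : Type v) [AddCommGroup M] [Module ℂ M] [LieRingModule g M] [LieModule ℂ g M]

/-- The Heisenberg representation on a `g`-module induced by the bracket action. -/
noncomputable def heisRepOf : HeisRep p φ.J M where
  I m i := LieModule.toEnd ℂ g M (S.I m i)
  C i := LieModule.toEnd ℂ g M (S.C i)
  C_symm i hi := by rw [S.C_symm i (J_lb hi) (J_ub hi)]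
  comm_II m n i j hi hj := by
    rw [← LieHom.map_lie, S.bracket_II m n i j (J_lb hi) (J_ub hi) (J_lb hj) (J_ub hj)]
    split_ifs with h
    · rw [map_smul]
    · rw [map_zero]
  central_CI m i j hi hj := by
    rw [← LieHom.map_lie, S.central_C j (J_ub hj) (S.I m i), map_zero]
  central_CC i j hi hj := by
    rw [← LieHom.map_lie, S.central_C j (J_ub hj) (S.C i), map_zero]

/-- The `𝔤_{J^C}` representation on a `g`-module induced by the bracket action. -/
noncomputable def gjcRepOf : GJCRep p φ.JC M where
  L m := LieModule.toEnd ℂ g M (S.L m)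
  I m i := LieModule.toEnd ℂ g M (S.I m i)
  C0 := LieModule.toEnd ℂ g M (S.C 0)
  C i := LieModule.toEnd ℂ g M (S.C i)
  C_symm i hi := by rw [S.C_symm i (JC_lb hi) (JC_ub hi)]
  comm_LL m n := by
    rw [← LieHom.map_lie, S.bracket_LL m n, map_add, map_smul]
    split_ifs with h
    · rw [map_smul]
    · rw [map_zero]
  comm_LI m n i hi := by
    rw [← LieHom.map_lie, S.bracket_LI m n i (JC_lb hi) (JC_ub hi), map_smul]
  comm_II m n i j hi hj := by
    rw [← LieHom.map_lie, S.bracket_II m n i j (JC_lb hi) (JC_ub hi) (JC_lb hj) (JC_ub hj)]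
    split_ifs with h
    · rw [map_smul]
    · rw [map_zero]
  central_C0 m := by
    constructor
    · rw [← LieHom.map_lie, S.central_C 0 (Nat.zero_le _) (S.L m), map_zero]
    · intro i hi
      rw [← LieHom.map_lie, S.central_C 0 (Nat.zero_le _) (S.I m i), map_zero]
  central_C j hj := by
    refine ⟨fun m => ?_, fun m i hi => ?_, ?_, fun i hi => ?_⟩ <;>
      rw [← LieHom.map_lie, S.central_C j (JC_ub hj) _, map_zero]

@[simp] theorem heisRepOf_I (m : ℤ) (i : ℕ) (u : M) :
    (heisRepOf S φ M).I m i u = ⁅S.I m i, u⁆ := rfl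

@[simp] theorem heisRepOf_C (i : ℕ) (u : M) :
    (heisRepOf S φ M).C i u = ⁅S.C i, u⁆ := rfl

@[simp] theorem gjcRepOf_L (m : ℤ) (u : M) : (gjcRepOf S φ M).L m u = ⁅S.L m, u⁆ := rfl
@[simp] theorem gjcRepOf_I (m : ℤ) (i : ℕ) (u : M) :
    (gjcRepOf S φ M).I m i u = ⁅S.I m i, u⁆ := rfl
@[simp] theorem gjcRepOf_C0 (u : M) : (gjcRepOf S φ M).C0 u = ⁅S.C 0, u⁆ := rfl
@[simp] theorem gjcRepOf_C (i : ℕ) (u : M) : (gjcRepOf S φ M).C i u = ⁅S.C i, u⁆ := rfl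

end Reps

section Theta

variable (M : Type v) [AddCommGroup M] [Module ℂ M] [LieRingModule g M] [LieModule ℂ g M]
variable (N : Type v) [AddCommGroup N] [Module ℂ N] [LieRingModule g N] [LieModule ℂ g N]

/-- The action of `g` on `M →ₗ[ℂ] N` by `x • T = x ∘ T - T ∘ x`. -/
noncomputable def theta (x : g) : Module.End ℂ (M →ₗ[ℂ] N) where
  toFun T := LieModule.toEnd ℂ g N x ∘ₗ T - T ∘ₗ LieModule.toEnd ℂ g M x
  map_add' T₁ T₂ := by
    ext u
    simp only [LinearMap.sub_apply, LinearMap.comp_apply, LinearMap.add_apply, map_add,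
      LieModule.toEnd_apply_apply]
    abel
  map_smul' a T := by
    ext u
    simp only [LinearMap.sub_apply, LinearMap.comp_apply, LinearMap.smul_apply, map_smul,
      LieModule.toEnd_apply_apply, RingHom.id_apply, lie_smul, smul_sub]

variable {M N}

@[simp] theorem theta_apply (x : g) (T : M →ₗ[ℂ] N) (u : M) :
    theta M N x T u = ⁅x, T u⁆ - T ⁅x, u⁆ := rfl

theorem theta_add (x y : g) : theta M N (x + y) = theta M N x + theta M N y := by
  ext T u
  simp only [theta_apply, LinearMap.add_apply, add_lie, map_add]
  abel

theorem theta_smul (a : ℂ) (x : g) : theta M N (a • x) = a • theta M N x := by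
  ext T u
  simp only [theta_apply, LinearMap.smul_apply, smul_lie, map_smul, smul_sub]

theorem theta_zero : theta M N (0 : g) = 0 := by
  ext T u
  simp only [theta_apply, zero_lie, map_zero, sub_zero, LinearMap.zero_apply]

theorem theta_lie (x y : g) : theta M N ⁅x, y⁆ = ⁅theta M N x, theta M N y⁆ := by
  ext T u
  simp only [Ring.lie_def, LinearMap.sub_apply, Module.End.mul_apply, theta_apply, lie_lie,
    map_sub, lie_sub, LinearMap.sub_apply]
  abel

variable (S : GapVirasoro p g) (φ : GapWeight p) (M N)

/-- The representation of `𝔤_{J^C}` on `M →ₗ[ℂ] N`. -/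
noncomputable def gjcHomRep : GJCRep p φ.JC (M →ₗ[ℂ] N) where
  L m := theta M N (S.L m)
  I m i := theta M N (S.I m i)
  C0 := theta M N (S.C 0)
  C i := theta M N (S.C i)
  C_symm i hi := by rw [S.C_symm i (JC_lb hi) (JC_ub hi)]
  comm_LL m n := by
    rw [← theta_lie, S.bracket_LL m n, theta_add, theta_smul]
    congr 1
    split_ifs with h
    · rw [theta_smul]
    · rw [theta_zero]
  comm_LI m n i hi := by
    rw [← theta_lie, S.bracket_LI m n i (JC_lb hi) (JC_ub hi), theta_smul]
  comm_II m n i j hi hj := by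
    rw [← theta_lie, S.bracket_II m n i j (JC_lb hi) (JC_ub hi) (JC_lb hj) (JC_ub hj)]
    split_ifs with h
    · rw [theta_smul]
    · rw [theta_zero]
  central_C0 m :=
    ⟨by rw [← theta_lie, S.central_C 0 (Nat.zero_le _) (S.L m), theta_zero],
     fun i hi => by rw [← theta_lie, S.central_C 0 (Nat.zero_le _) (S.I m i), theta_zero]⟩
  central_C j hj :=
    ⟨fun m => by rw [← theta_lie, S.central_C j (JC_ub hj) _, theta_zero],
     fun m i hi => by rw [← theta_lie, S.central_C j (JC_ub hj) _, theta_zero],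
     by rw [← theta_lie, S.central_C j (JC_ub hj) _, theta_zero],
     fun i hi => by rw [← theta_lie, S.central_C j (JC_ub hj) _, theta_zero]⟩

@[simp] theorem gjcHomRep_L (m : ℤ) : (gjcHomRep M N S φ).L m = theta M N (S.L m) := rfl
@[simp] theorem gjcHomRep_I (m : ℤ) (i : ℕ) :
    (gjcHomRep M N S φ).I m i = theta M N (S.I m i) := rfl
@[simp] theorem gjcHomRep_C0 : (gjcHomRep M N S φ).C0 = theta M N (S.C 0) := rfl
@[simp] theorem gjcHomRep_C (i : ℕ) : (gjcHomRep M N S φ).C i = theta M N (S.C i) := rfl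

end Theta

section HWv1

variable {S : GapVirasoro p g} {φ : GapWeight p}
variable {M1 : Type v} [AddCommGroup M1] [Module ℂ M1] [LieRingModule g M1] [LieModule ℂ g M1]
variable {v1 : M1}

theorem lie_I_v1 (hM1 : S.IsHeisVermaExt φ v1) :
    ∀ (m : ℤ), 0 ≤ m → ∀ i : ℕ, 1 ≤ i → i ≤ p - 1 → ⁅S.I m i, v1⁆ = 0 := by
  intro m hm i h1 h2
  by_cases hi : i ∈ φ.J
  · exact hM1.1.1 m hm i hi
  · exact hM1.2.1 m i h1 h2 hi v1

theorem lie_L_v1 (hp : 1 < p) (hM1 : S.IsHeisVermaExt φ v1) (n : ℤ) (hn : 0 ≤ n) :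
    ⁅S.L n, v1⁆ =
      (if n = 0 then ∑ j ∈ φ.J, (j : ℂ) * ((p : ℂ) - (j : ℂ)) / (4 * (p : ℂ) ^ 2) else 0) • v1 := by
  have hIall := lie_I_v1 hM1
  rw [hM1.2.2.2.2.2 n v1]
  unfold gapLnFormula
  have hz : ∀ j ∈ φ.J,
      (∑ᶠ k : ℤ, if k < n - k - 1 then ⁅S.I k j, ⁅S.I (n - k - 1) (p - j), v1⁆⁆
        else ⁅S.I (n - k - 1) (p - j), ⁅S.I k j, v1⁆⁆) = 0 := by
    intro j hj
    have hb1 : 1 ≤ p - j := by have := J_ub (φ := φ) hj; omega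
    have hb2 : p - j ≤ p - 1 := by have := J_lb (φ := φ) hj; omega
    have hfun : ∀ k : ℤ, (if k < n - k - 1 then ⁅S.I k j, ⁅S.I (n - k - 1) (p - j), v1⁆⁆
        else ⁅S.I (n - k - 1) (p - j), ⁅S.I k j, v1⁆⁆) = 0 := by
      intro k
      split_ifs with h
      · rw [hIall (n - k - 1) (by omega) (p - j) hb1 hb2, lie_zero]
      · rw [hIall k (by omega) j (J_lb hj) (J_ub hj), lie_zero]
    rw [finsum_congr hfun, finsum_zero]
  rw [Finset.sum_congr rfl (fun j hj => by rw [hz j hj, smul_zero]), Finset.sum_const_zero,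
    zero_add]
  split_ifs with h
  · rfl
  · rw [zero_smul]

end HWv1

section Cyclic

variable {S : GapVirasoro p g} {φ : GapWeight p}

theorem heis_cyclic (hp : 1 < p)
    {M1 : Type v} [AddCommGroup M1] [Module ℂ M1] [LieRingModule g M1] [LieModule ℂ g M1]
    {v1 : M1} (hM1 : S.IsHeisVermaExt φ v1) (W : Submodule ℂ M1)
    (hv : v1 ∈ W) (hWI : ∀ (m : ℤ), ∀ i ∈ φ.J, ∀ u ∈ W, ⁅S.I m i, u⁆ ∈ W) : W = ⊤ := by
  classical
  obtain ⟨⟨hvI, hvC, huniv⟩, hItriv, hCJ, hCJC, hC0, hL⟩ := hM1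
  have hWC : ∀ i ∈ φ.J, ∀ u ∈ W, ⁅S.C i, u⁆ ∈ W := fun i hi u hu => by
    rw [hCJ i hi u]; exact W.smul_mem _ hu
  let ρQ : HeisRep p φ.J (M1 ⧸ W) :=
    { I := fun m i => if h : i ∈ φ.J then
        W.mapQ W (LieModule.toEnd ℂ g M1 (S.I m i)) (fun u hu => Submodule.mem_comap.2 (hWI m i h u hu)) else 0
      C := fun i => if h : i ∈ φ.J then
        W.mapQ W (LieModule.toEnd ℂ g M1 (S.C i)) (fun u hu => Submodule.mem_comap.2 (hWC i h u hu)) else 0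
      C_symm := fun i hi => by
        rw [dif_pos (J_symm hp hi), dif_pos hi]
        apply Submodule.linearMap_qext
        ext u
        simp only [LinearMap.comp_apply, Submodule.mkQ_apply, Submodule.mapQ_apply,
          LieModule.toEnd_apply_apply, S.C_symm i (J_lb hi) (J_ub hi)]
      comm_II := fun m n i j hi hj => by
        rw [dif_pos hi, dif_pos hj]
        have hmin : min i (p - i) ∈ φ.J := min_mem_J hp hi
        apply Submodule.linearMap_qext
        ext u
        simp only [LinearMap.comp_apply, Submodule.mkQ_apply, Ring.lie_def, LinearMap.sub_apply,
          Module.End.mul_apply, Submodule.mapQ_apply, LieModule.toEnd_apply_apply]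
        rw [← Submodule.Quotient.mk_sub, ← lie_lie,
          S.bracket_II m n i j (J_lb hi) (J_ub hi) (J_lb hj) (J_ub hj)]
        split_ifs with h
        · simp only [smul_lie, Submodule.Quotient.mk_smul, LinearMap.smul_apply,
            dif_pos hmin, Submodule.mapQ_apply, LieModule.toEnd_apply_apply]
        · simp only [zero_lie, Submodule.Quotient.mk_zero, LinearMap.zero_apply]
      central_CI := fun m i j hi hj => by
        rw [dif_pos hi, dif_pos hj]
        apply Submodule.linearMap_qext
        ext u
        simp only [LinearMap.comp_apply, Submodule.mkQ_apply, Ring.lie_def, LinearMap.sub_apply,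
          Module.End.mul_apply, Submodule.mapQ_apply, LieModule.toEnd_apply_apply]
        rw [← Submodule.Quotient.mk_sub, ← lie_lie, S.central_C j (J_ub hj) (S.I m i), zero_lie,
          Submodule.Quotient.mk_zero]
        exact (LinearMap.zero_apply _).symm
      central_CC := fun i j hi hj => by
        rw [dif_pos hi, dif_pos hj]
        apply Submodule.linearMap_qext
        ext u
        simp only [LinearMap.comp_apply, Submodule.mkQ_apply, Ring.lie_def, LinearMap.sub_apply,
          Module.End.mul_apply, Submodule.mapQ_apply, LieModule.toEnd_apply_apply]
        rw [← Submodule.Quotient.mk_sub, ← lie_lie, S.central_C j (J_ub hj) (S.C i), zero_lie,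
          Submodule.Quotient.mk_zero]
        exact (LinearMap.zero_apply _).symm }
  have h0 : ρQ.IsHWVector φ.C 0 :=
    ⟨fun n hn i hi => map_zero _, fun i hi => by rw [map_zero, smul_zero]⟩
  obtain ⟨f, hf, hfu⟩ := huniv (M1 ⧸ W) ρQ 0 h0
  have hmkQ : W.mkQ = f := by
    refine hfu W.mkQ ⟨?_, ?_, ?_⟩
    · rw [Submodule.mkQ_apply, Submodule.Quotient.mk_eq_zero]; exact hv
    · intro m i hi u
      show _ = ρQ.I m i _
      simp only [ρQ, dif_pos hi, Submodule.mkQ_apply, Submodule.mapQ_apply,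
        LieModule.toEnd_apply_apply]
    · intro i hi u
      show _ = ρQ.C i _
      simp only [ρQ, dif_pos hi, Submodule.mkQ_apply, Submodule.mapQ_apply,
        LieModule.toEnd_apply_apply]
  have hzero : (0 : M1 →ₗ[ℂ] M1 ⧸ W) = f := by
    refine hfu 0 ⟨rfl, ?_, ?_⟩
    · intro m i hi u; rw [LinearMap.zero_apply, LinearMap.zero_apply, map_zero]
    · intro i hi u; rw [LinearMap.zero_apply, LinearMap.zero_apply, map_zero]
  rw [Submodule.eq_top_iff']
  intro u
  rw [← Submodule.Quotient.mk_eq_zero, ← Submodule.mkQ_apply, hmkQ, ← hzero,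
    LinearMap.zero_apply]

theorem gjc_cyclic (hp : 1 < p)
    {M2 : Type v} [AddCommGroup M2] [Module ℂ M2] [LieRingModule g M2] [LieModule ℂ g M2]
    {v2 : M2} (hM2 : S.IsGJCVermaExt φ v2) (W : Submodule ℂ M2)
    (hv : v2 ∈ W)
    (hWL : ∀ (m : ℤ), ∀ u ∈ W, ⁅S.L m, u⁆ ∈ W)
    (hWI : ∀ (m : ℤ), ∀ i ∈ φ.JC, ∀ u ∈ W, ⁅S.I m i, u⁆ ∈ W)
    (hWC0 : ∀ u ∈ W, ⁅S.C 0, u⁆ ∈ W)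
    (hWC : ∀ i ∈ φ.JC, ∀ u ∈ W, ⁅S.C i, u⁆ ∈ W) : W = ⊤ := by
  classical
  obtain ⟨⟨hvL, hvI, hvL0, hvC0, hvC, huniv⟩, hJI, hJC⟩ := hM2
  let ρQ : GJCRep p φ.JC (M2 ⧸ W) :=
    { L := fun m => W.mapQ W (LieModule.toEnd ℂ g M2 (S.L m)) (fun u hu => Submodule.mem_comap.2 (hWL m u hu))
      I := fun m i => if h : i ∈ φ.JC then
        W.mapQ W (LieModule.toEnd ℂ g M2 (S.I m i)) (fun u hu => Submodule.mem_comap.2 (hWI m i h u hu)) else 0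
      C0 := W.mapQ W (LieModule.toEnd ℂ g M2 (S.C 0)) (fun u hu => Submodule.mem_comap.2 (hWC0 u hu))
      C := fun i => if h : i ∈ φ.JC then
        W.mapQ W (LieModule.toEnd ℂ g M2 (S.C i)) (fun u hu => Submodule.mem_comap.2 (hWC i h u hu)) else 0
      C_symm := fun i hi => by
        rw [dif_pos (JC_symm hp hi), dif_pos hi]
        apply Submodule.linearMap_qext
        ext u
        simp only [LinearMap.comp_apply, Submodule.mkQ_apply, Submodule.mapQ_apply,
          LieModule.toEnd_apply_apply, S.C_symm i (JC_lb hi) (JC_ub hi)]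
      comm_LL := fun m n => by
        apply Submodule.linearMap_qext
        ext u
        simp only [LinearMap.comp_apply, Submodule.mkQ_apply, Ring.lie_def, LinearMap.sub_apply,
          Module.End.mul_apply, Submodule.mapQ_apply, LieModule.toEnd_apply_apply]
        rw [← Submodule.Quotient.mk_sub, ← lie_lie, S.bracket_LL m n]
        split_ifs with h
        · simp only [add_lie, smul_lie, Submodule.Quotient.mk_add, Submodule.Quotient.mk_smul,
            LinearMap.add_apply, LinearMap.smul_apply, Submodule.mapQ_apply,
            LieModule.toEnd_apply_apply]
        · simp only [add_zero, smul_lie, Submodule.Quotient.mk_smul, LinearMap.add_apply,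
            LinearMap.smul_apply, Submodule.mapQ_apply, LieModule.toEnd_apply_apply]
      comm_LI := fun m n i hi => by
        rw [dif_pos hi]
        apply Submodule.linearMap_qext
        ext u
        simp only [LinearMap.comp_apply, Submodule.mkQ_apply, Ring.lie_def, LinearMap.sub_apply,
          Module.End.mul_apply, Submodule.mapQ_apply, LieModule.toEnd_apply_apply]
        rw [← Submodule.Quotient.mk_sub, ← lie_lie, S.bracket_LI m n i (JC_lb hi) (JC_ub hi),
          smul_lie, Submodule.Quotient.mk_smul]
        simp only [dif_pos hi, LinearMap.smul_apply, Submodule.mapQ_apply,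
          LieModule.toEnd_apply_apply]
      comm_II := fun m n i j hi hj => by
        rw [dif_pos hi, dif_pos hj]
        have hmin : min i (p - i) ∈ φ.JC := by
          rcases le_total i (p - i) with hle | hle
          · rwa [min_eq_left hle]
          · rw [min_eq_right hle]; exact JC_symm hp hi
        apply Submodule.linearMap_qext
        ext u
        simp only [LinearMap.comp_apply, Submodule.mkQ_apply, Ring.lie_def, LinearMap.sub_apply,
          Module.End.mul_apply, Submodule.mapQ_apply, LieModule.toEnd_apply_apply]
        rw [← Submodule.Quotient.mk_sub, ← lie_lie,
          S.bracket_II m n i j (JC_lb hi) (JC_ub hi) (JC_lb hj) (JC_ub hj)]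
        split_ifs with h
        · simp only [smul_lie, Submodule.Quotient.mk_smul, LinearMap.smul_apply,
            dif_pos hmin, Submodule.mapQ_apply, LieModule.toEnd_apply_apply]
        · simp only [zero_lie, Submodule.Quotient.mk_zero, LinearMap.zero_apply]
      central_C0 := fun m => by
        constructor
        · apply Submodule.linearMap_qext
          ext u
          simp only [LinearMap.comp_apply, Submodule.mkQ_apply, Ring.lie_def,
            LinearMap.sub_apply, Module.End.mul_apply, Submodule.mapQ_apply,
            LieModule.toEnd_apply_apply]
          rw [← Submodule.Quotient.mk_sub, ← lie_lie, S.central_C 0 (Nat.zero_le _) (S.L m), zero_lie,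
          Submodule.Quotient.mk_zero]
          exact (LinearMap.zero_apply _).symm
        · intro i hi
          rw [dif_pos hi]
          apply Submodule.linearMap_qext
          ext u
          simp only [LinearMap.comp_apply, Submodule.mkQ_apply, Ring.lie_def,
            LinearMap.sub_apply, Module.End.mul_apply, Submodule.mapQ_apply,
            LieModule.toEnd_apply_apply]
          rw [← Submodule.Quotient.mk_sub, ← lie_lie, S.central_C 0 (Nat.zero_le _) (S.I m i), zero_lie,
          Submodule.Quotient.mk_zero]
          exact (LinearMap.zero_apply _).symm
      central_C := fun j hj => by
        refine ⟨fun m => ?_, fun m i hi => ?_, ?_, fun i hi => ?_⟩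
        · rw [dif_pos hj]
          apply Submodule.linearMap_qext
          ext u
          simp only [LinearMap.comp_apply, Submodule.mkQ_apply, Ring.lie_def,
            LinearMap.sub_apply, Module.End.mul_apply, Submodule.mapQ_apply,
            LieModule.toEnd_apply_apply]
          rw [← Submodule.Quotient.mk_sub, ← lie_lie, S.central_C j (JC_ub hj) (S.L m), zero_lie,
          Submodule.Quotient.mk_zero]
          exact (LinearMap.zero_apply _).symm
        · rw [dif_pos hj, dif_pos hi]
          apply Submodule.linearMap_qext
          ext u
          simp only [LinearMap.comp_apply, Submodule.mkQ_apply, Ring.lie_def,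
            LinearMap.sub_apply, Module.End.mul_apply, Submodule.mapQ_apply,
            LieModule.toEnd_apply_apply]
          rw [← Submodule.Quotient.mk_sub, ← lie_lie, S.central_C j (JC_ub hj) (S.I m i), zero_lie,
          Submodule.Quotient.mk_zero]
          exact (LinearMap.zero_apply _).symm
        · rw [dif_pos hj]
          apply Submodule.linearMap_qext
          ext u
          simp only [LinearMap.comp_apply, Submodule.mkQ_apply, Ring.lie_def,
            LinearMap.sub_apply, Module.End.mul_apply, Submodule.mapQ_apply,
            LieModule.toEnd_apply_apply]
          rw [← Submodule.Quotient.mk_sub, ← lie_lie, S.central_C j (JC_ub hj) (S.C 0), zero_lie,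
          Submodule.Quotient.mk_zero]
          exact (LinearMap.zero_apply _).symm
        · rw [dif_pos hj, dif_pos hi]
          apply Submodule.linearMap_qext
          ext u
          simp only [LinearMap.comp_apply, Submodule.mkQ_apply, Ring.lie_def,
            LinearMap.sub_apply, Module.End.mul_apply, Submodule.mapQ_apply,
            LieModule.toEnd_apply_apply]
          rw [← Submodule.Quotient.mk_sub, ← lie_lie, S.central_C j (JC_ub hj) (S.C i), zero_lie,
          Submodule.Quotient.mk_zero]
          exact (LinearMap.zero_apply _).symm }
  have h0 : ρQ.IsHWVector φ.psiL0 φ.psiC0 0 :=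
    ⟨fun n hn => map_zero _, fun n hn i hi => by dsimp only [ρQ]; rw [dif_pos hi, map_zero],
     by rw [map_zero, smul_zero], by rw [map_zero, smul_zero], fun i hi => by
       dsimp only [ρQ]; rw [dif_pos hi, map_zero]⟩
  obtain ⟨f, hf, hfu⟩ := huniv (M2 ⧸ W) ρQ 0 h0
  have hmkQ : W.mkQ = f := by
    refine hfu W.mkQ ⟨?_, ?_, ?_, ?_, ?_⟩
    · rw [Submodule.mkQ_apply, Submodule.Quotient.mk_eq_zero]; exact hv
    · intro m u
      simp only [ρQ, Submodule.mkQ_apply, Submodule.mapQ_apply, LieModule.toEnd_apply_apply]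
    · intro m i hi u
      show _ = ρQ.I m i _
      simp only [ρQ, dif_pos hi, Submodule.mkQ_apply, Submodule.mapQ_apply,
        LieModule.toEnd_apply_apply]
    · intro u
      simp only [ρQ, Submodule.mkQ_apply, Submodule.mapQ_apply, LieModule.toEnd_apply_apply]
    · intro i hi u
      show _ = ρQ.C i _
      simp only [ρQ, dif_pos hi, Submodule.mkQ_apply, Submodule.mapQ_apply,
        LieModule.toEnd_apply_apply]
  have hzero : (0 : M2 →ₗ[ℂ] M2 ⧸ W) = f := by
    refine hfu 0 ⟨rfl, ?_, ?_, ?_, ?_⟩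
    · intro m u; rw [LinearMap.zero_apply, LinearMap.zero_apply, map_zero]
    · intro m i hi u; rw [LinearMap.zero_apply, LinearMap.zero_apply, map_zero]
    · intro u; rw [LinearMap.zero_apply, LinearMap.zero_apply, map_zero]
    · intro i hi u; rw [LinearMap.zero_apply, LinearMap.zero_apply, map_zero]
  rw [Submodule.eq_top_iff']
  intro u
  rw [← Submodule.Quotient.mk_eq_zero, ← Submodule.mkQ_apply, hmkQ, ← hzero,
    LinearMap.zero_apply]

end Cyclic

section Engine

variable {S : GapVirasoro p g} {φ : GapWeight p}
variable {M1 : Type v} [AddCommGroup M1] [Module ℂ M1] [LieRingModule g M1] [LieModule ℂ g M1]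
variable {v1 : M1}
variable {N : Type v} [AddCommGroup N] [Module ℂ N] [LieRingModule g N] [LieModule ℂ g N]
variable {w : N}

/-- Existence of the Heisenberg-equivariant map `f1 : M1 → N`. -/
theorem exists_f1 (hM1 : S.IsHeisVermaExt φ v1) (hw : S.IsHWVector φ w) :
    ∃ f1 : M1 →ₗ[ℂ] N, f1 v1 = w ∧
      (∀ (m : ℤ), ∀ i ∈ φ.J, ∀ u : M1, f1 ⁅S.I m i, u⁆ = ⁅S.I m i, f1 u⁆) ∧
      (∀ i ∈ φ.J, ∀ u : M1, f1 ⁅S.C i, u⁆ = ⁅S.C i, f1 u⁆) := by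
  have hwHW : (heisRepOf S φ N).IsHWVector φ.C w :=
    ⟨fun n hn i hi => hw.2.1 n hn i (J_lb hi) (J_ub hi), fun i hi => hw.2.2.2 i (J_ub hi)⟩
  obtain ⟨f1, ⟨hfv, hfI, hfC⟩, -⟩ := hM1.1.2.2 N (heisRepOf S φ N) w hwHW
  exact ⟨f1, hfv, hfI, hfC⟩

variable (hp : 1 < p) (hM1 : S.IsHeisVermaExt φ v1) (hw : S.IsHWVector φ w)
variable {f1 : M1 →ₗ[ℂ] N} (hfv : f1 v1 = w)
variable (hfI : ∀ (m : ℤ), ∀ i ∈ φ.J, ∀ u : M1, f1 ⁅S.I m i, u⁆ = ⁅S.I m i, f1 u⁆)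

include hp hM1 hw hfv hfI

theorem f1_C : ∀ j : ℕ, j ≤ p - 1 → ∀ u : M1, ⁅S.C j, f1 u⁆ = φ.C j • f1 u := by
  intro j hj
  set T : M1 →ₗ[ℂ] N :=
    LieModule.toEnd ℂ g N (S.C j) ∘ₗ f1 - φ.C j • f1 with hT
  have hker : LinearMap.ker T = ⊤ := by
    apply heis_cyclic hp hM1
    · simp only [LinearMap.mem_ker, hT, LinearMap.sub_apply, LinearMap.comp_apply,
        LinearMap.smul_apply, LieModule.toEnd_apply_apply, hfv, hw.2.2.2 j hj, sub_self]
    · intro m i hi u hu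
      simp only [LinearMap.mem_ker, hT, LinearMap.sub_apply, LinearMap.comp_apply,
        LinearMap.smul_apply, LieModule.toEnd_apply_apply, sub_eq_zero] at hu ⊢
      rw [hfI m i hi u, leibniz_lie, S.central_C j hj (S.I m i), zero_lie, zero_add, hu,
        lie_smul]
  intro u
  have : u ∈ LinearMap.ker T := by rw [hker]; trivial
  simpa only [LinearMap.mem_ker, hT, LinearMap.sub_apply, LinearMap.comp_apply,
    LinearMap.smul_apply, LieModule.toEnd_apply_apply, sub_eq_zero] using this

theorem f1_I : ∀ n : ℤ, 0 ≤ n → ∀ i ∈ φ.JC, ∀ u : M1, ⁅S.I n i, f1 u⁆ = 0 := by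
  intro n hn i hi
  set T : M1 →ₗ[ℂ] N := LieModule.toEnd ℂ g N (S.I n i) ∘ₗ f1 with hT
  have hker : LinearMap.ker T = ⊤ := by
    apply heis_cyclic hp hM1
    · simp only [LinearMap.mem_ker, hT, LinearMap.comp_apply, LieModule.toEnd_apply_apply,
        hfv, hw.2.1 n hn i (JC_lb hi) (JC_ub hi)]
    · intro m j hj u hu
      simp only [LinearMap.mem_ker, hT, LinearMap.comp_apply,
        LieModule.toEnd_apply_apply] at hu ⊢
      rw [hfI m j hj u, leibniz_lie,
        S.bracket_II n m i j (JC_lb hi) (JC_ub hi) (J_lb hj) (J_ub hj),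
        if_neg (by rintro ⟨h1, -⟩; exact JC_add_J_ne hp hi hj h1), zero_lie, zero_add, hu,
        lie_zero]
  intro u
  have : u ∈ LinearMap.ker T := by rw [hker]; trivial
  simpa only [LinearMap.mem_ker, hT, LinearMap.comp_apply,
    LieModule.toEnd_apply_apply] using this

theorem f1_L : ∀ n : ℤ, 0 ≤ n → ∀ u : M1,
    ⁅S.L n, f1 u⁆ = f1 ⁅S.L n, u⁆ + (if n = 0 then φ.psiL0 else 0) • f1 u := by
  intro n hn
  set δ : ℂ := if n = 0 then φ.psiL0 else 0 with hδ
  set T : M1 →ₗ[ℂ] N :=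
    LieModule.toEnd ℂ g N (S.L n) ∘ₗ f1 - f1 ∘ₗ LieModule.toEnd ℂ g M1 (S.L n) - δ • f1
    with hT
  have hker : LinearMap.ker T = ⊤ := by
    apply heis_cyclic hp hM1
    · simp only [LinearMap.mem_ker, hT, LinearMap.sub_apply, LinearMap.comp_apply,
        LinearMap.smul_apply, LieModule.toEnd_apply_apply, hfv]
      rw [lie_L_v1 hp hM1 n hn, map_smul, hfv]
      by_cases h0 : n = 0
      · subst h0
        rw [hw.2.2.1, if_pos rfl, hδ, if_pos rfl, GapWeight.psiL0, sub_smul]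
        abel
      · rw [hw.1 n (by omega), hδ]
        simp [h0]
    · intro m j hj u hu
      simp only [LinearMap.mem_ker, hT, LinearMap.sub_apply, LinearMap.comp_apply,
        LinearMap.smul_apply, LieModule.toEnd_apply_apply] at hu ⊢
      rw [sub_sub, sub_eq_zero] at hu
      rw [sub_sub, sub_eq_zero]
      have hNside : ⁅S.L n, f1 ⁅S.I m j, u⁆⁆ =
          (-((m : ℂ) + (j : ℂ) / (p : ℂ))) • f1 ⁅S.I (n + m) j, u⁆ +
            (f1 ⁅S.I m j, ⁅S.L n, u⁆⁆ + δ • f1 ⁅S.I m j, u⁆) := by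
        rw [hfI m j hj u, leibniz_lie, S.bracket_LI n m j (J_lb hj) (J_ub hj), smul_lie, hu,
          lie_add, lie_smul, ← hfI (n + m) j hj u, ← hfI m j hj ⁅S.L n, u⁆,
          ← hfI m j hj u]
      have hMside : f1 ⁅S.L n, ⁅S.I m j, u⁆⁆ =
          (-((m : ℂ) + (j : ℂ) / (p : ℂ))) • f1 ⁅S.I (n + m) j, u⁆ +
            f1 ⁅S.I m j, ⁅S.L n, u⁆⁆ := by
        rw [leibniz_lie, S.bracket_LI n m j (J_lb hj) (J_ub hj), smul_lie, map_add, map_smul]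
      rw [hNside, hMside]
      abel
  intro u
  have hu : u ∈ LinearMap.ker T := by rw [hker]; trivial
  simp only [LinearMap.mem_ker, hT, LinearMap.sub_apply, LinearMap.comp_apply,
    LinearMap.smul_apply, LieModule.toEnd_apply_apply] at hu
  rw [sub_sub, sub_eq_zero] at hu
  rw [hu]

/-- `f1` is a `𝔤_{J^C}`-highest weight vector in `Hom(M1, N)`. -/
theorem f1_isHW : (gjcHomRep M1 N S φ).IsHWVector φ.psiL0 φ.psiC0 f1 := by
  have hL := f1_L hp hM1 hw hfv hfI
  have hC := f1_C hp hM1 hw hfv hfI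
  have hI := f1_I hp hM1 hw hfv hfI
  refine ⟨?_, ?_, ?_, ?_, ?_⟩
  · intro n hn
    show theta M1 N (S.L n) f1 = 0
    ext u
    rw [theta_apply, hL n (by omega) u, if_neg (by omega), zero_smul, add_zero, sub_self,
      LinearMap.zero_apply]
  · intro n hn i hi
    show theta M1 N (S.I n i) f1 = 0
    ext u
    rw [theta_apply, hI n hn i hi u, hM1.2.1 n i (JC_lb hi) (JC_ub hi) (JC_not_mem_J hi) u,
      map_zero, sub_zero, LinearMap.zero_apply]
  · show theta M1 N (S.L 0) f1 = φ.psiL0 • f1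
    ext u
    rw [theta_apply, hL 0 le_rfl u, if_pos rfl, LinearMap.smul_apply]
    abel
  · show theta M1 N (S.C 0) f1 = φ.psiC0 • f1
    ext u
    rw [theta_apply, hC 0 (Nat.zero_le _) u, hM1.2.2.2.2.1 u, map_smul, LinearMap.smul_apply,
      GapWeight.psiC0, sub_smul]
  · intro i hi
    show theta M1 N (S.C i) f1 = 0
    ext u
    rw [theta_apply, hC i (JC_ub hi) u, JC_C_eq hi, zero_smul,
      hM1.2.2.2.1 i (JC_lb hi) (JC_ub hi) (JC_not_mem_J hi) u, map_zero, sub_zero,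
      LinearMap.zero_apply]

end Engine

section Main

variable {S : GapVirasoro p g} {φ : GapWeight p}
variable {M1 : Type v} [AddCommGroup M1] [Module ℂ M1] [LieRingModule g M1] [LieModule ℂ g M1]
variable {M2 : Type v} [AddCommGroup M2] [Module ℂ M2] [LieRingModule g M2] [LieModule ℂ g M2]
variable {v1 : M1} {v2 : M2}

set_option maxRecDepth 2000 in
set_option maxHeartbeats 2000000 in
open TensorProduct.LieModule in
/-- Existence of a morphism out of the tensor product, into any module with a highest
weight vector of weight `φ`. -/
theorem exists_lieHom (hp : 1 < p) (hM1 : S.IsHeisVermaExt φ v1) (hM2 : S.IsGJCVermaExt φ v2)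
    {N : Type v} [AddCommGroup N] [Module ℂ N] [LieRingModule g N] [LieModule ℂ g N]
    {w : N} (hw : S.IsHWVector φ w) :
    ∃ F : (M1 ⊗[ℂ] M2) →ₗ⁅ℂ,g⁆ N, F (v1 ⊗ₜ[ℂ] v2) = w := by
  classical
  obtain ⟨f1, hfv, hfI, hfC⟩ := exists_f1 hM1 hw
  have hHW := f1_isHW hp hM1 hw hfv hfI
  obtain ⟨f2, ⟨hf2v, hf2L, hf2I, hf2C0, hf2C⟩, -⟩ :=
    hM2.1.2.2.2.2.2 (M1 →ₗ[ℂ] N) (gjcHomRep M1 N S φ) f1 hHW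
  simp only [gjcHomRep_L] at hf2L
  simp only [gjcHomRep_I] at hf2I
  simp only [gjcHomRep_C0] at hf2C0
  simp only [gjcHomRep_C] at hf2C
  -- `f2 u2` is Heisenberg-equivariant for every `u2`
  let W2 : Submodule ℂ M2 :=
    { carrier := {u2 | (∀ (m : ℤ), ∀ i ∈ φ.J, ∀ u1 : M1,
          f2 u2 ⁅S.I m i, u1⁆ = ⁅S.I m i, f2 u2 u1⁆) ∧
        (∀ i ∈ φ.J, ∀ u1 : M1, ⁅S.C i, f2 u2 u1⁆ = φ.C i • f2 u2 u1)}
      zero_mem' := by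
        constructor
        · intro m i hi u1
          rw [map_zero]
          simp only [LinearMap.zero_apply, lie_zero]
        · intro i hi u1
          rw [map_zero]
          simp only [LinearMap.zero_apply, lie_zero, smul_zero]
      add_mem' := by
        rintro a b ⟨ha1, ha2⟩ ⟨hb1, hb2⟩
        refine ⟨fun m i hi u1 => ?_, fun i hi u1 => ?_⟩
        · simp only [map_add, LinearMap.add_apply, ha1 m i hi u1, hb1 m i hi u1, lie_add]
        · simp only [map_add, LinearMap.add_apply, ha2 i hi u1, hb2 i hi u1, lie_add,
            smul_add]
      smul_mem' := by
        rintro a x ⟨hx1, hx2⟩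
        refine ⟨fun m i hi u1 => ?_, fun i hi u1 => ?_⟩
        · simp only [map_smul, LinearMap.smul_apply, hx1 m i hi u1, lie_smul]
        · simp only [map_smul, LinearMap.smul_apply, lie_smul, hx2 i hi u1]
          rw [smul_comm] }
  have hCprop : ∀ (T : M1 →ₗ[ℂ] N) (x : g),
      (∀ i ∈ φ.J, ∀ u1 : M1, ⁅S.C i, T u1⁆ = φ.C i • T u1) →
      ∀ i ∈ φ.J, ∀ u1 : M1, ⁅S.C i, theta M1 N x T u1⁆ = φ.C i • theta M1 N x T u1 := by
    intro T x hT i hi u1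
    rw [theta_apply, lie_sub, leibniz_lie, S.central_C i (J_ub hi) x, zero_lie, zero_add,
      hT i hi u1, hT i hi ⁅x, u1⁆, lie_smul, smul_sub]
  have hIprop_central : ∀ (T : M1 →ₗ[ℂ] N) (x : g),
      (∀ (m : ℤ), ∀ i ∈ φ.J, ⁅x, S.I m i⁆ = 0) →
      (∀ (m : ℤ), ∀ i ∈ φ.J, ∀ u1 : M1, T ⁅S.I m i, u1⁆ = ⁅S.I m i, T u1⁆) →
      ∀ (m : ℤ), ∀ i ∈ φ.J, ∀ u1 : M1,
        theta M1 N x T ⁅S.I m i, u1⁆ = ⁅S.I m i, theta M1 N x T u1⁆ := by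
    intro T x hx hT m i hi u1
    rw [theta_apply, theta_apply, hT m i hi u1, leibniz_lie x (S.I m i) (T u1), hx m i hi,
      zero_lie, zero_add, leibniz_lie x (S.I m i) u1, hx m i hi, zero_lie, zero_add,
      hT m i hi ⁅x, u1⁆, lie_sub]
  have hIprop_L : ∀ (T : M1 →ₗ[ℂ] N) (m0 : ℤ),
      (∀ (m : ℤ), ∀ i ∈ φ.J, ∀ u1 : M1, T ⁅S.I m i, u1⁆ = ⁅S.I m i, T u1⁆) →
      ∀ (k : ℤ), ∀ i ∈ φ.J, ∀ u1 : M1,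
        theta M1 N (S.L m0) T ⁅S.I k i, u1⁆ = ⁅S.I k i, theta M1 N (S.L m0) T u1⁆ := by
    intro T m0 hT k i hi u1
    rw [theta_apply, theta_apply, hT k i hi u1, leibniz_lie (S.L m0) (S.I k i) (T u1),
      leibniz_lie (S.L m0) (S.I k i) u1, S.bracket_LI m0 k i (J_lb hi) (J_ub hi)]
    simp only [smul_lie, map_add, map_smul, lie_sub, hT (m0 + k) i hi u1,
      hT k i hi ⁅S.L m0, u1⁆]
    abel
  have hW2 : W2 = ⊤ := by
    apply gjc_cyclic hp hM2
    · exact ⟨fun m i hi u1 => by rw [hf2v, hfI m i hi u1],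
        fun i hi u1 => by rw [hf2v]; exact f1_C hp hM1 hw hfv hfI i (J_ub hi) u1⟩
    · rintro m u ⟨hu1, hu2⟩
      refine ⟨?_, ?_⟩
      · intro k i hi u1
        rw [hf2L m u]
        exact hIprop_L (f2 u) m hu1 k i hi u1
      · intro i hi u1
        rw [hf2L m u]
        exact hCprop (f2 u) (S.L m) hu2 i hi u1
    · rintro m i0 hi0 u ⟨hu1, hu2⟩
      have hx : ∀ (k : ℤ), ∀ i ∈ φ.J, ⁅S.I m i0, S.I k i⁆ = 0 := by
        intro k i hi
        rw [S.bracket_II m k i0 i (JC_lb hi0) (JC_ub hi0) (J_lb hi) (J_ub hi),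
          if_neg (by rintro ⟨h1, -⟩; exact JC_add_J_ne hp hi0 hi h1)]
      refine ⟨?_, ?_⟩
      · intro k i hi u1
        rw [hf2I m i0 hi0 u]
        exact hIprop_central (f2 u) (S.I m i0) hx hu1 k i hi u1
      · intro i hi u1
        rw [hf2I m i0 hi0 u]
        exact hCprop (f2 u) (S.I m i0) hu2 i hi u1
    · rintro u ⟨hu1, hu2⟩
      have hx : ∀ (k : ℤ), ∀ i ∈ φ.J, ⁅S.C 0, S.I k i⁆ = 0 := fun k i hi =>
        S.central_C 0 (Nat.zero_le _) (S.I k i)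
      refine ⟨?_, ?_⟩
      · intro k i hi u1
        rw [hf2C0 u]
        exact hIprop_central (f2 u) (S.C 0) hx hu1 k i hi u1
      · intro i hi u1
        rw [hf2C0 u]
        exact hCprop (f2 u) (S.C 0) hu2 i hi u1
    · rintro i0 hi0 u ⟨hu1, hu2⟩
      have hx : ∀ (k : ℤ), ∀ i ∈ φ.J, ⁅S.C i0, S.I k i⁆ = 0 := fun k i hi =>
        S.central_C i0 (JC_ub hi0) (S.I k i)
      refine ⟨?_, ?_⟩
      · intro k i hi u1
        rw [hf2C i0 hi0 u]
        exact hIprop_central (f2 u) (S.C i0) hx hu1 k i hi u1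
      · intro i hi u1
        rw [hf2C i0 hi0 u]
        exact hCprop (f2 u) (S.C i0) hu2 i hi u1
  have hQ : ∀ u2 : M2, (∀ (m : ℤ), ∀ i ∈ φ.J, ∀ u1 : M1,
        f2 u2 ⁅S.I m i, u1⁆ = ⁅S.I m i, f2 u2 u1⁆) ∧
      (∀ i ∈ φ.J, ∀ u1 : M1, ⁅S.C i, f2 u2 u1⁆ = φ.C i • f2 u2 u1) := by
    intro u2
    have : u2 ∈ W2 := by rw [hW2]; trivial
    exact this
  -- the underlying linear map
  set F0 : M1 ⊗[ℂ] M2 →ₗ[ℂ] N := TensorProduct.lift f2.flip with hF0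
  have hF0tmul : ∀ (u1 : M1) (u2 : M2), F0 (u1 ⊗ₜ[ℂ] u2) = f2 u2 u1 := fun u1 u2 => rfl
  have hgenL : ∀ (n : ℤ) (t : M1 ⊗[ℂ] M2), F0 ⁅S.L n, t⁆ = ⁅S.L n, F0 t⁆ := by
    intro n t
    induction t using TensorProduct.induction_on with
    | zero => simp only [lie_zero, map_zero]
    | tmul u1 u2 =>
      rw [lie_tmul_right, map_add, hF0tmul, hF0tmul, hF0tmul, hf2L n u2, theta_apply]
      abel
    | add x y hx hy => rw [lie_add, map_add, hx, hy, map_add, lie_add]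
  have hgenI : ∀ (n : ℤ) (i : ℕ), 1 ≤ i → i ≤ p - 1 →
      ∀ t : M1 ⊗[ℂ] M2, F0 ⁅S.I n i, t⁆ = ⁅S.I n i, F0 t⁆ := by
    intro n i h1 h2 t
    induction t using TensorProduct.induction_on with
    | zero => simp only [lie_zero, map_zero]
    | tmul u1 u2 =>
      by_cases hi : i ∈ φ.J
      · rw [lie_tmul_right, hM2.2.1 n i hi u2, TensorProduct.tmul_zero, add_zero, hF0tmul,
          hF0tmul, (hQ u2).1 n i hi u1]
      · have hi' : i ∈ φ.JC := not_mem_J_mem_JC h1 h2 hi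
        rw [lie_tmul_right, hM1.2.1 n i h1 h2 hi u1, TensorProduct.zero_tmul, zero_add,
          hF0tmul, hF0tmul, hf2I n i hi' u2, theta_apply, hM1.2.1 n i h1 h2 hi u1, map_zero,
          sub_zero]
    | add x y hx hy => rw [lie_add, map_add, hx, hy, map_add, lie_add]
  have hgenC : ∀ j : ℕ, j ≤ p - 1 → ∀ t : M1 ⊗[ℂ] M2, F0 ⁅S.C j, t⁆ = ⁅S.C j, F0 t⁆ := by
    intro j hj t
    induction t using TensorProduct.induction_on with
    | zero => simp only [lie_zero, map_zero]
    | tmul u1 u2 =>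
      rcases Nat.eq_zero_or_pos j with h0 | hpos
      · subst h0
        rw [lie_tmul_right, map_add, hF0tmul, hF0tmul, hF0tmul, hf2C0 u2, theta_apply]
        abel
      · by_cases hij : j ∈ φ.J
        · rw [lie_tmul_right, hM2.2.2 j hij u2, TensorProduct.tmul_zero, add_zero, hF0tmul,
            hF0tmul, hM1.2.2.1 j hij u1, map_smul, ← (hQ u2).2 j hij u1]
        · have hij' : j ∈ φ.JC := not_mem_J_mem_JC hpos hj hij
          rw [lie_tmul_right, map_add, hF0tmul, hF0tmul, hF0tmul, hf2C j hij' u2, theta_apply]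
          abel
    | add x y hx hy => rw [lie_add, map_add, hx, hy, map_add, lie_add]
  have hall : ∀ (x : g) (t : M1 ⊗[ℂ] M2), F0 ⁅x, t⁆ = ⁅x, F0 t⁆ := by
    intro x t
    let A : g →ₗ[ℂ] N :=
      { toFun := fun x => F0 ⁅x, t⁆
        map_add' := fun a b => by rw [add_lie, map_add]
        map_smul' := fun a x => by
          simp only [RingHom.id_apply]
          rw [smul_lie, map_smul] }
    let B : g →ₗ[ℂ] N :=
      { toFun := fun x => ⁅x, F0 t⁆
        map_add' := fun a b => by rw [add_lie]
        map_smul' := fun a x => by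
          simp only [RingHom.id_apply]
          rw [smul_lie] }
    have hAB : A = B := by
      apply S.basis.ext
      intro idx
      show F0 ⁅S.basis idx, t⁆ = ⁅S.basis idx, F0 t⁆
      cases idx with
      | L n => rw [S.basis_L]; exact hgenL n t
      | I n i => rw [S.basis_I]; exact hgenI n i.1 i.2.1 i.2.2 t
      | C j => rw [S.basis_C]; exact hgenC j.1 (by have := j.2; omega) t
    exact DFunLike.congr_fun hAB x
  refine ⟨{ toLinearMap := F0, map_lie' := fun {x m} => hall x m }, ?_⟩
  show F0 (v1 ⊗ₜ[ℂ] v2) = w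
  rw [hF0tmul, hf2v, hfv]

open TensorProduct.LieModule in
/-- Uniqueness of morphisms out of the tensor product. -/
theorem lieHom_unique (hp : 1 < p) (hM1 : S.IsHeisVermaExt φ v1) (hM2 : S.IsGJCVermaExt φ v2)
    {N : Type v} [AddCommGroup N] [Module ℂ N] [LieRingModule g N] [LieModule ℂ g N]
    (F G : (M1 ⊗[ℂ] M2) →ₗ⁅ℂ,g⁆ N) (hFG : F (v1 ⊗ₜ[ℂ] v2) = G (v1 ⊗ₜ[ℂ] v2)) : F = G := by
  classical
  have hstep : ∀ (x : g) (u2 : M2), (∀ u1 : M1, F (u1 ⊗ₜ[ℂ] u2) = G (u1 ⊗ₜ[ℂ] u2)) →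
      ∀ u1 : M1, F (u1 ⊗ₜ[ℂ] ⁅x, u2⁆) = G (u1 ⊗ₜ[ℂ] ⁅x, u2⁆) := by
    intro x u2 hu u1
    have hdecomp : u1 ⊗ₜ[ℂ] ⁅x, u2⁆ = ⁅x, u1 ⊗ₜ[ℂ] u2⁆ - ⁅x, u1⁆ ⊗ₜ[ℂ] u2 := by
      rw [lie_tmul_right]; abel
    rw [hdecomp, map_sub F, map_sub G, F.map_lie, G.map_lie, hu u1, hu ⁅x, u1⁆]
  have hW1 : ∀ u1 : M1, F (u1 ⊗ₜ[ℂ] v2) = G (u1 ⊗ₜ[ℂ] v2) := by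
    let W1 : Submodule ℂ M1 :=
      { carrier := {u1 | F (u1 ⊗ₜ[ℂ] v2) = G (u1 ⊗ₜ[ℂ] v2)}
        zero_mem' := by simp only [Set.mem_setOf_eq, TensorProduct.zero_tmul, map_zero F, map_zero G]
        add_mem' := fun {a b} ha hb => by
          simp only [Set.mem_setOf_eq, TensorProduct.add_tmul, map_add F, map_add G] at ha hb ⊢
          rw [ha, hb]
        smul_mem' := fun a x hx => by
          have hx' : F (x ⊗ₜ[ℂ] v2) = G (x ⊗ₜ[ℂ] v2) := hx
          show F _ = G _
          rw [← TensorProduct.smul_tmul', map_smul F, map_smul G, hx'] }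
    have : W1 = ⊤ := by
      apply heis_cyclic hp hM1
      · exact hFG
      · intro m i hi u hu
        show F _ = G _
        have htm : ⁅S.I m i, u⁆ ⊗ₜ[ℂ] v2 = ⁅S.I m i, u ⊗ₜ[ℂ] v2⁆ := by
          rw [lie_tmul_right, hM2.2.1 m i hi v2, TensorProduct.tmul_zero, add_zero]
        have hu' : F (u ⊗ₜ[ℂ] v2) = G (u ⊗ₜ[ℂ] v2) := hu
        rw [htm, F.map_lie, G.map_lie, hu']
    intro u1
    have hmem : u1 ∈ W1 := by rw [this]; trivial
    exact hmem
  have hW2 : ∀ u2 : M2, ∀ u1 : M1, F (u1 ⊗ₜ[ℂ] u2) = G (u1 ⊗ₜ[ℂ] u2) := by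
    let W2 : Submodule ℂ M2 :=
      { carrier := {u2 | ∀ u1 : M1, F (u1 ⊗ₜ[ℂ] u2) = G (u1 ⊗ₜ[ℂ] u2)}
        zero_mem' := by
          intro u1
          simp only [TensorProduct.tmul_zero, map_zero F, map_zero G]
        add_mem' := fun {a b} ha hb u1 => by
          simp only [TensorProduct.tmul_add, map_add F, map_add G, ha u1, hb u1]
        smul_mem' := fun a x hx u1 => by
          simp only [TensorProduct.tmul_smul, map_smul F, map_smul G, hx u1] }
    have : W2 = ⊤ := by
      apply gjc_cyclic hp hM2
      · exact hW1
      · intro m u hu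
        exact hstep (S.L m) u hu
      · intro m i hi u hu
        exact hstep (S.I m i) u hu
      · intro u hu
        exact hstep (S.C 0) u hu
      · intro i hi u hu
        exact hstep (S.C i) u hu
    intro u2
    have hmem : u2 ∈ W2 := by rw [this]; trivial
    exact hmem
  apply LieModuleHom.ext
  intro t
  induction t using TensorProduct.induction_on with
  | zero => rw [map_zero F, map_zero G]
  | tmul u1 u2 => exact hW2 u2 u1
  | add x y hx hy => rw [map_add F, map_add G, hx, hy]

open TensorProduct.LieModule in
/-- `v1 ⊗ v2` is a highest weight vector of weight `φ`. -/
theorem tensor_isHW (hp : 1 < p) (hM1 : S.IsHeisVermaExt φ v1) (hM2 : S.IsGJCVermaExt φ v2) :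
    S.IsHWVector φ (v1 ⊗ₜ[ℂ] v2 : M1 ⊗[ℂ] M2) := by
  refine ⟨?_, ?_, ?_, ?_⟩
  · intro n hn
    rw [lie_tmul_right, lie_L_v1 hp hM1 n (le_of_lt hn), if_neg (by omega), zero_smul,
      TensorProduct.zero_tmul, zero_add, hM2.1.1 n hn, TensorProduct.tmul_zero]
  · intro n hn i h1 h2
    rw [lie_tmul_right, lie_I_v1 hM1 n hn i h1 h2, TensorProduct.zero_tmul, zero_add]
    by_cases hi : i ∈ φ.J
    · rw [hM2.2.1 n i hi v2, TensorProduct.tmul_zero]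
    · rw [hM2.1.2.1 n hn i (not_mem_J_mem_JC h1 h2 hi), TensorProduct.tmul_zero]
  · rw [lie_tmul_right, lie_L_v1 hp hM1 0 le_rfl, if_pos rfl, hM2.1.2.2.1,
      TensorProduct.tmul_smul, ← TensorProduct.smul_tmul', ← add_smul]
    congr 1
    rw [GapWeight.psiL0]
    ring
  · intro j hj
    rw [lie_tmul_right]
    rcases Nat.eq_zero_or_pos j with h0 | hpos
    · subst h0
      rw [hM1.2.2.2.2.1 v1, hM2.1.2.2.2.1, TensorProduct.tmul_smul,
        ← TensorProduct.smul_tmul', ← add_smul]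
      congr 1
      rw [GapWeight.psiC0]
      ring
    · by_cases hij : j ∈ φ.J
      · rw [hM1.2.2.1 j hij v1, hM2.2.2 j hij v2, TensorProduct.tmul_zero, add_zero,
          TensorProduct.smul_tmul']
      · rw [hM1.2.2.2.1 j hpos hj hij v1, hM2.1.2.2.2.2.1 j (not_mem_J_mem_JC hpos hj hij),
          TensorProduct.zero_tmul, TensorProduct.tmul_zero, add_zero,
          not_mem_J_C_eq hpos hj hij, zero_smul]

end Main

end VermaIsoAux

/-- For `φ ∈ 𝔥*` with `J ≠ ∅`, the Verma module `M_{𝔤,φ}` is isomorphic as a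
`𝔤`-module to `(M_{𝔥_J,φ})^𝔤 ⊗ (M_{𝔤_{J^C},ψ})^e`. -/
theorem verma_iso_tensor {p : ℕ} (hp : 1 < p) {g : Type u} [LieRing g] [LieAlgebra ℂ g]
    (S : GapVirasoro p g) (φ : GapWeight p) (hJ : φ.J.Nonempty)
    {M0 : Type v} [AddCommGroup M0] [Module ℂ M0] [LieRingModule g M0] [LieModule ℂ g M0]
    (v0 : M0) (hM0 : S.IsVerma φ v0)
    {M1 : Type v} [AddCommGroup M1] [Module ℂ M1] [LieRingModule g M1] [LieModule ℂ g M1]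
    (v1 : M1) (hM1 : S.IsHeisVermaExt φ v1)
    {M2 : Type v} [AddCommGroup M2] [Module ℂ M2] [LieRingModule g M2] [LieModule ℂ g M2]
    (v2 : M2) (hM2 : S.IsGJCVermaExt φ v2) :
    Nonempty (M0 ≃ₗ⁅ℂ,g⁆ (M1 ⊗[ℂ] M2)) := by
  classical
  have hwT : S.IsHWVector φ (v1 ⊗ₜ[ℂ] v2 : M1 ⊗[ℂ] M2) :=
    VermaIsoAux.tensor_isHW hp hM1 hM2
  obtain ⟨f, hfv, -⟩ := hM0.2 (M1 ⊗[ℂ] M2) (v1 ⊗ₜ[ℂ] v2) hwT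
  obtain ⟨h, hh⟩ := VermaIsoAux.exists_lieHom hp hM1 hM2 hM0.1
  obtain ⟨e, he, heuniq⟩ := hM0.2 M0 v0 hM0.1
  have h1 : h.comp f = LieModuleHom.id := by
    have ha : (h.comp f) v0 = v0 := by
      rw [LieModuleHom.comp_apply, hfv, hh]
    have hb : (LieModuleHom.id : M0 →ₗ⁅ℂ,g⁆ M0) v0 = v0 := rfl
    rw [heuniq _ ha, heuniq _ hb]
  have h2 : f.comp h = LieModuleHom.id := by
    apply VermaIsoAux.lieHom_unique hp hM1 hM2
    rw [LieModuleHom.comp_apply, hh, hfv]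
    rfl
  exact ⟨{ toLieModuleHom := f
           invFun := h
           left_inv := fun x => by
             have := DFunLike.congr_fun h1 x
             simpa using this
           right_inv := fun y => by
             have := DFunLike.congr_fun h2 y
             simpa using this }⟩
end

section
/- Let p > 1 be an integer, 𝔤 the gap-p Virasoro algebra, θ a conjugate-linear anti-involution of 𝔤, and λ ∈ {1,−1} the sign with θ(L_0) = λL_0 + C(L_0), C(L_0) central. Then there exist nonzero complex numbers A_{n,i} (n ∈ ℤ, 1 ≤ i ≤ p−1) such that θ(I_n^i) = A_{−n−1,p−i} I_{−n−1}^{p−i} if λ = 1 and θ(I_n^i) = A_{n,i} I_n^i if λ = −1, and θ(C_i) = λ A_{0,i} A_{−1,p−i} C_i for all 1 ≤ i ≤ p−1. In particular θ(ℋ) = ℋ, where ℋ = span{I_n^i, C_i : n ∈ ℤ, 1 ≤ i ≤ p−1}. -/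
open scoped TensorProduct

universe u v

section AntiInvolAux

universe u'

noncomputable def gapEig (p : ℕ) : GapIdx p → ℂ
  | .L m => -(m : ℂ)
  | .I m i => -((m : ℂ) + (i.1 : ℂ) / (p : ℂ))
  | .C _ => 0

lemma gapKey {p : ℕ} (hp : 0 < p) (a d : ℤ) (hd : d.natAbs < p)
    (h : (a : ℂ) + (d : ℂ) / (p : ℂ) = 0) : a = 0 ∧ d = 0 := by
  have hp' : (p : ℂ) ≠ 0 := Nat.cast_ne_zero.mpr hp.ne'
  have h2 : ((a * p + d : ℤ) : ℂ) = 0 := by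
    field_simp at h
    push_cast
    linear_combination h
  have h3 : a * (p : ℤ) + d = 0 := by exact_mod_cast h2
  have hd' : d = -(a * p) := by linarith
  have ha : a = 0 := by
    by_contra ha
    have h1 : 1 ≤ a.natAbs := Int.natAbs_pos.mpr ha
    have h5 : d.natAbs = a.natAbs * p := by
      rw [hd', Int.natAbs_neg, Int.natAbs_mul]
      simp
    nlinarith [hd, h5]
  refine ⟨ha, by simpa [ha] using h3⟩

variable {p : ℕ} {g : Type u'} [LieRing g] [LieAlgebra ℂ g]

lemma gapBracketL0Basis (hp : 1 < p) (S : GapVirasoro p g) (e : GapIdx p) :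
    ⁅S.L 0, S.basis e⁆ = gapEig p e • S.basis e := by
  cases e with
  | L m =>
    rw [S.basis_L, S.bracket_LL]
    by_cases hm : m = 0
    · subst hm; simp [gapEig]
    · rw [if_neg (by simpa using hm)]
      simp [gapEig]
  | I m i =>
    rw [S.basis_I, S.bracket_LI 0 m i.1 i.2.1 i.2.2]
    simp [gapEig]
  | C j =>
    rw [S.basis_C, ← lie_skew, S.central_C j.1 (by omega) (S.L 0)]
    simp [gapEig]

lemma gapReprBracketL0 (hp : 1 < p) (S : GapVirasoro p g) (x : g) (e : GapIdx p) :
    S.basis.repr ⁅S.L 0, x⁆ e = gapEig p e * S.basis.repr x e := by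
  have hmap : (Finsupp.lapply e ∘ₗ (S.basis.repr.toLinearMap ∘ₗ LieAlgebra.ad ℂ g (S.L 0)))
      = gapEig p e • (Finsupp.lapply e ∘ₗ (S.basis.repr.toLinearMap : g →ₗ[ℂ] _)) := by
    apply S.basis.ext
    intro e'
    simp only [LinearMap.comp_apply, LieAlgebra.ad_apply, LinearMap.smul_apply,
      Finsupp.lapply_apply, gapBracketL0Basis hp S e', map_smul, Module.Basis.repr_self,
      Finsupp.smul_apply, smul_eq_mul]
    by_cases hee : e' = e
    · subst hee; rfl
    · simp [Module.Basis.repr_self, Finsupp.single_apply, hee]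
  have := LinearMap.congr_fun hmap x
  simpa using this

lemma gapEigvec (hp : 1 < p) (S : GapVirasoro p g) (x : g) (μ : ℂ)
    (hx : ⁅S.L 0, x⁆ = μ • x) (e₀ : GapIdx p)
    (hu : ∀ e : GapIdx p, gapEig p e = μ → e = e₀) :
    x = S.basis.repr x e₀ • S.basis e₀ := by
  have hcoord : ∀ e : GapIdx p, e ≠ e₀ → S.basis.repr x e = 0 := by
    intro e he
    have h1 := gapReprBracketL0 hp S x e
    rw [hx, map_smul, Finsupp.smul_apply, smul_eq_mul] at h1
    rcases mul_eq_zero.mp (show (gapEig p e - μ) * S.basis.repr x e = 0 by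
      linear_combination -h1) with h | h
    · exact absurd (hu e (sub_eq_zero.mp h)) he
    · exact h
  apply S.basis.repr.injective
  ext e
  by_cases he : e = e₀
  · subst he
    simp [Module.Basis.repr_self, Finsupp.single_apply]
  · rw [hcoord e he]
    simp [Module.Basis.repr_self, Finsupp.single_apply, Ne.symm he, he]

lemma gapEigUnique (hp : 1 < p) (n' : ℤ) (i' : ℕ) (h1 : 1 ≤ i') (h2 : i' ≤ p - 1)
    (e : GapIdx p) (he : gapEig p e = -((n' : ℂ) + (i' : ℂ) / (p : ℂ))) :
    e = GapIdx.I n' ⟨i', h1, h2⟩ := by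
  have hp0 : 0 < p := by omega
  cases e with
  | L m =>
    exfalso
    have hk := gapKey hp0 (m - n') (-(i' : ℤ)) (by omega)
      (by push_cast; simp only [gapEig] at he; linear_combination -he)
    omega
  | I m j =>
    obtain ⟨hj1, hj2⟩ := j.2
    have hk := gapKey hp0 (m - n') ((j.1 : ℤ) - (i' : ℤ)) (by omega)
      (by push_cast; simp only [gapEig] at he; linear_combination -he)
    obtain ⟨ha, hd⟩ := hk
    have hm : m = n' := by omega
    have hj : j.1 = i' := by omega
    subst hm
    congr 1
    exact Subtype.ext hj
  | C j =>
    exfalso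
    have hk := gapKey hp0 n' (i' : ℤ) (by omega)
      (by push_cast; simp only [gapEig] at he; linear_combination he)
    omega

end AntiInvolAux
/-- Values of a conjugate-linear anti-involution on the `I n i` and `C i`,
according to the sign `λ` appearing in `θ(L 0) = λ L 0 + C(L 0)`; in particular `θ(ℋ) = ℋ`. -/
theorem anti_involution_heisenberg {p : ℕ} (hp : 1 < p) {g : Type u} [LieRing g]
    [LieAlgebra ℂ g] (S : GapVirasoro p g) (θ : g → g)
    (hθ : IsConjLinearAntiInvolution g θ)
    (lam : ℂ) (hlam : lam = 1 ∨ lam = -1) (c0 : g) (hc0 : c0 ∈ S.centerSub)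
    (hL0 : θ (S.L 0) = lam • S.L 0 + c0) :
    ∃ A : ℤ → ℕ → ℂ,
      (∀ (n : ℤ) (i : ℕ), 1 ≤ i → i ≤ p - 1 → A n i ≠ 0) ∧
      (lam = 1 → ∀ (n : ℤ) (i : ℕ), 1 ≤ i → i ≤ p - 1 →
        θ (S.I n i) = A (-n - 1) (p - i) • S.I (-n - 1) (p - i)) ∧
      (lam = -1 → ∀ (n : ℤ) (i : ℕ), 1 ≤ i → i ≤ p - 1 →
        θ (S.I n i) = A n i • S.I n i) ∧
      (∀ i : ℕ, 1 ≤ i → i ≤ p - 1 →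
        θ (S.C i) = (lam * A 0 i * A (-1) (p - i)) • S.C i) ∧
      θ '' (S.heisSub : Set g) = (S.heisSub : Set g) := by
  classical
  have hp0 : 0 < p := by omega
  have hpc : (p : ℂ) ≠ 0 := Nat.cast_ne_zero.mpr hp0.ne'
  have hll : lam * lam = 1 := by rcases hlam with h | h <;> rw [h] <;> norm_num
  have hzero : θ 0 = 0 := by
    have := hθ.map_smul 0 0
    simpa using this
  have hθinj : ∀ x : g, θ x = 0 → x = 0 := by
    intro x hx
    have h := hθ.invol x
    rw [hx, hzero] at h
    exact h.symm
  have hcent : ∀ y ∈ S.centerSub, ∀ x : g, ⁅y, x⁆ = 0 := by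
    intro y hy
    unfold GapVirasoro.centerSub at hy
    induction hy using Submodule.span_induction with
    | mem z hz => obtain ⟨j, hj, rfl⟩ := hz; exact S.central_C j hj
    | zero => intro x; simp
    | add a b _ _ ha hb => intro x; rw [add_lie, ha x, hb x, add_zero]
    | smul a z _ hz => intro x; rw [smul_lie, hz x, smul_zero]
  have hbracket : ∀ (m : ℤ) (j : ℕ), 1 ≤ j → j ≤ p - 1 →
      ⁅S.L 0, θ (S.I m j)⁆ = (lam * ((m : ℂ) + (j : ℂ) / (p : ℂ))) • θ (S.I m j) := by
    intro m j hj1 hj2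
    set x := θ (S.I m j) with hxdef
    have hml := hθ.map_lie (S.L 0) (S.I m j)
    rw [S.bracket_LI 0 m j hj1 hj2, zero_add, hθ.map_smul, hL0, lie_add, lie_smul,
      ← lie_skew x c0, hcent c0 hc0 x, neg_zero, add_zero, ← lie_skew x (S.L 0)] at hml
    have hconj : (starRingEnd ℂ) (-((m : ℂ) + (j : ℂ) / (p : ℂ)))
        = -((m : ℂ) + (j : ℂ) / (p : ℂ)) := by
      simp [map_div₀]
    rw [hconj] at hml
    have h3 : lam • ⁅S.L 0, x⁆ = ((m : ℂ) + (j : ℂ) / (p : ℂ)) • x := by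
      rw [smul_neg, neg_smul] at hml
      exact (neg_inj.mp hml).symm
    calc ⁅S.L 0, x⁆ = (lam * lam) • ⁅S.L 0, x⁆ := by rw [hll, one_smul]
      _ = lam • (lam • ⁅S.L 0, x⁆) := by rw [mul_smul]
      _ = lam • (((m : ℂ) + (j : ℂ) / (p : ℂ)) • x) := by rw [h3]
      _ = (lam * ((m : ℂ) + (j : ℂ) / (p : ℂ))) • x := by rw [smul_smul]
  have hmain : ∀ (n : ℤ) (i : ℕ), 1 ≤ i → i ≤ p - 1 → ∃ c : ℂ, c ≠ 0 ∧
      (lam = 1 → θ (S.I (-n - 1) (p - i)) = c • S.I n i) ∧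
      (lam = -1 → θ (S.I n i) = c • S.I n i) := by
    intro n i h1 h2
    rcases hlam with h | h
    · have hpi1 : 1 ≤ p - i := by omega
      have hpi2 : p - i ≤ p - 1 := by omega
      set x := θ (S.I (-n - 1) (p - i)) with hxdef
      have hbr := hbracket (-n - 1) (p - i) hpi1 hpi2
      have hμ : lam * (((-n - 1 : ℤ) : ℂ) + ((p - i : ℕ) : ℂ) / (p : ℂ))
          = -((n : ℂ) + (i : ℂ) / (p : ℂ)) := by
        rw [h, one_mul]
        push_cast [Nat.cast_sub (show i ≤ p by omega)]
        field_simp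
        ring
      rw [hμ] at hbr
      have hev := gapEigvec hp S x _ hbr (GapIdx.I n ⟨i, h1, h2⟩)
        (fun e he => gapEigUnique hp n i h1 h2 e he)
      rw [S.basis_I] at hev
      refine ⟨_, ?_, fun _ => hev, fun h' => absurd (h.symm.trans h') (by norm_num)⟩
      intro hc
      rw [hc, zero_smul, hxdef] at hev
      have h6 := hθinj _ hev
      have hb := S.basis.ne_zero (GapIdx.I (-n - 1) ⟨p - i, hpi1, hpi2⟩)
      rw [S.basis_I] at hb
      exact hb h6
    · set x := θ (S.I n i) with hxdef
      have hbr := hbracket n i h1 h2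
      have hμ : lam * ((n : ℂ) + (i : ℂ) / (p : ℂ)) = -((n : ℂ) + (i : ℂ) / (p : ℂ)) := by
        rw [h]; ring
      rw [hμ] at hbr
      have hev := gapEigvec hp S x _ hbr (GapIdx.I n ⟨i, h1, h2⟩)
        (fun e he => gapEigUnique hp n i h1 h2 e he)
      rw [S.basis_I] at hev
      refine ⟨_, ?_, fun h' => absurd (h.symm.trans h') (by norm_num), fun _ => hev⟩
      intro hc
      rw [hc, zero_smul, hxdef] at hev
      have h6 := hθinj _ hev
      have hb := S.basis.ne_zero (GapIdx.I n ⟨i, h1, h2⟩)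
      rw [S.basis_I] at hb
      exact hb h6
  have hmain' : ∀ (n : ℤ) (i : ℕ), ∃ c : ℂ, 1 ≤ i → i ≤ p - 1 → c ≠ 0 ∧
      (lam = 1 → θ (S.I (-n - 1) (p - i)) = c • S.I n i) ∧
      (lam = -1 → θ (S.I n i) = c • S.I n i) := by
    intro n i
    by_cases h : 1 ≤ i ∧ i ≤ p - 1
    · obtain ⟨c, hc⟩ := hmain n i h.1 h.2
      exact ⟨c, fun _ _ => hc⟩
    · exact ⟨1, fun h1 h2 => absurd ⟨h1, h2⟩ h⟩
  choose A hA using hmain'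
  have hth1 : lam = 1 → ∀ (n : ℤ) (i : ℕ), 1 ≤ i → i ≤ p - 1 →
      θ (S.I n i) = A (-n - 1) (p - i) • S.I (-n - 1) (p - i) := by
    intro h n i hi1 hi2
    have hv := (hA (-n - 1) (p - i) (by omega) (by omega)).2.1 h
    rw [show (-(-n - 1) - 1 : ℤ) = n from by ring, show p - (p - i) = i from by omega] at hv
    exact hv
  have hth2 : lam = -1 → ∀ (n : ℤ) (i : ℕ), 1 ≤ i → i ≤ p - 1 →
      θ (S.I n i) = A n i • S.I n i := by
    intro h n i hi1 hi2
    exact (hA n i hi1 hi2).2.2 h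
  have hthC : ∀ i : ℕ, 1 ≤ i → i ≤ p - 1 →
      θ (S.C i) = (lam * A 0 i * A (-1) (p - i)) • S.C i := by
    intro i hi1 hi2
    have hpi1 : 1 ≤ p - i := by omega
    have hpi2 : p - i ≤ p - 1 := by omega
    have hip : ((i : ℂ) / (p : ℂ)) ≠ 0 :=
      div_ne_zero (Nat.cast_ne_zero.mpr (by omega)) hpc
    have hCmin : S.C (min i (p - i)) = S.C i := by
      rcases le_total i (p - i) with h | h
      · rw [min_eq_left h]
      · rw [min_eq_right h, S.C_symm i hi1 hi2]
    have hII : ⁅S.I 0 i, S.I (-1) (p - i)⁆ = ((i : ℂ) / (p : ℂ)) • S.C i := by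
      rw [S.bracket_II 0 (-1) i (p - i) hi1 hi2 hpi1 hpi2,
        if_pos ⟨by omega, by norm_num⟩, hCmin]
      norm_num
    have hml := hθ.map_lie (S.I 0 i) (S.I (-1) (p - i))
    rw [hII, hθ.map_smul, show (starRingEnd ℂ) ((i : ℂ) / (p : ℂ)) = (i : ℂ) / (p : ℂ)
      from by simp [map_div₀]] at hml
    rcases hlam with h | h
    · have he1 := hth1 h (-1) (p - i) hpi1 hpi2
      rw [show (-(-1 : ℤ) - 1 : ℤ) = 0 from by ring,
        show p - (p - i) = i from by omega] at he1
      have he2 := hth1 h 0 i hi1 hi2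
      rw [show (-(0 : ℤ) - 1 : ℤ) = -1 from by ring] at he2
      rw [he1, he2, smul_lie, lie_smul, hII, smul_smul, smul_smul] at hml
      refine smul_right_injective g hip ?_
      show ((i : ℂ) / (p : ℂ)) • θ (S.C i)
          = ((i : ℂ) / (p : ℂ)) • ((lam * A 0 i * A (-1) (p - i)) • S.C i)
      rw [hml, smul_smul, h]
      congr 1
      ring
    · have he1 := hth2 h (-1) (p - i) hpi1 hpi2
      have he2 := hth2 h 0 i hi1 hi2
      have hII' : ⁅S.I (-1) (p - i), S.I 0 i⁆ = (-((i : ℂ) / (p : ℂ))) • S.C i := by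
        rw [S.bracket_II (-1) 0 (p - i) i hpi1 hpi2 hi1 hi2,
          if_pos ⟨by omega, by norm_num⟩, show p - (p - i) = i from by omega]
        have hCmin' : S.C (min (p - i) i) = S.C i := by
          rcases le_total (p - i) i with h' | h'
          · rw [min_eq_left h', S.C_symm i hi1 hi2]
          · rw [min_eq_right h']
        rw [hCmin']
        congr 1
        push_cast [Nat.cast_sub (show i ≤ p by omega)]
        field_simp
        ring
      rw [he1, he2, smul_lie, lie_smul, hII', smul_smul, smul_smul] at hml
      refine smul_right_injective g hip ?_
      show ((i : ℂ) / (p : ℂ)) • θ (S.C i)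
          = ((i : ℂ) / (p : ℂ)) • ((lam * A 0 i * A (-1) (p - i)) • S.C i)
      rw [hml, smul_smul, h]
      congr 1
      ring
  have hfwd : ∀ x ∈ S.heisSub, θ x ∈ S.heisSub := by
    intro x hx
    unfold GapVirasoro.heisSub at hx
    induction hx using Submodule.span_induction with
    | mem z hz =>
      rcases hz with ⟨n, i, hi1, hi2, rfl⟩ | ⟨i, hi1, hi2, rfl⟩
      · rcases hlam with h | h
        · rw [hth1 h n i hi1 hi2]
          exact Submodule.smul_mem _ _ (Submodule.subset_span
            (Or.inl ⟨-n - 1, p - i, by omega, by omega, rfl⟩))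
        · rw [hth2 h n i hi1 hi2]
          exact Submodule.smul_mem _ _ (Submodule.subset_span
            (Or.inl ⟨n, i, hi1, hi2, rfl⟩))
      · rw [hthC i hi1 hi2]
        exact Submodule.smul_mem _ _ (Submodule.subset_span
          (Or.inr ⟨i, hi1, hi2, rfl⟩))
    | zero => rw [hzero]; exact Submodule.zero_mem _
    | add a b _ _ ha hb => rw [hθ.map_add]; exact Submodule.add_mem _ ha hb
    | smul a z _ hz => rw [hθ.map_smul]; exact Submodule.smul_mem _ _ hz
  refine ⟨A, fun n i h1 h2 => (hA n i h1 h2).1, hth1, hth2, hthC, ?_⟩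
  apply Set.Subset.antisymm
  · rintro _ ⟨x, hx, rfl⟩
    exact hfwd x hx
  · intro x hx
    exact ⟨θ x, hfwd x hx, hθ.invol x⟩
end
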